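/- arXiv:2205.13704 — 4 statements merged into one kernel-verified Lean document; each statement's English description precedes it below -/
import Mathlib

section
/- A finite directed multigraph G has no intersecting cycles if and only if for every strongly connected component C of G that contains at least one edge (where a strongly connected component is an equivalence class of vertices under mutual reachability, together with all edges of G having both endpoints in the class), the edges of C constitute exactly one simple cycle passing exactly once through each vertex of C. -/
open Filter Topology

variable {V E : Type*}

/-- A nonempty list of edges forms a directed path:
the target of each edge is the source of the next. -/
def IsDiPath (src tgt : E → V) (l : List E) : Prop :=
  l ≠ [] ∧ l.Chain' (fun e f => tgt e = src f)

/-- The path `l` starts at the vertex `v` (the source of its first edge is `v`). -/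
def StartsAt (src : E → V) (l : List E) (v : V) : Prop :=
  l.head?.map src = some v

/-- The path `l` ends at the vertex `w` (the target of its last edge is `w`). -/
def EndsAt (tgt : E → V) (l : List E) (w : V) : Prop :=
  l.getLast?.map tgt = some w

/-- `l` is a closed path: a path such that the target of the last edge
equals the source of the first edge. -/
def IsClosedDiPath (src tgt : E → V) (l : List E) : Prop :=
  IsDiPath src tgt l ∧ ∃ v : V, StartsAt src l v ∧ EndsAt tgt l v

/-- `l` is a simple cycle: a closed path whose edge sources are pairwise distinct. -/
def IsSimpleCycle (src tgt : E → V) (l : List E) : Prop :=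
  IsClosedDiPath src tgt l ∧ (l.map src).Nodup

/-- The vertex `v` lies on the cycle `l`, i.e. it is the source of one of its edges. -/
def OnCycle (src : E → V) (l : List E) (v : V) : Prop :=
  v ∈ l.map src

/-- Two simple cycles are distinct if neither is a cyclic rotation of the other;
the graph has no intersecting cycles if any two distinct simple cycles are
vertex-disjoint. -/
def NoIntersectingCycles (src tgt : E → V) : Prop :=
  ∀ l l' : List E, IsSimpleCycle src tgt l → IsSimpleCycle src tgt l' →
    ¬ l.IsRotated l' → ∀ v : V, ¬ (OnCycle src l v ∧ OnCycle src l' v)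

/-- `v ≥ w`: either `v = w` or there is a directed path from `v` to `w`. -/
def Reaches (src tgt : E → V) (v w : V) : Prop :=
  v = w ∨ ∃ l : List E, IsDiPath src tgt l ∧ StartsAt src l v ∧ EndsAt tgt l w

/-- `v` and `w` are mutually reachable. -/
def MutReach (src tgt : E → V) (v w : V) : Prop :=
  Reaches src tgt v w ∧ Reaches src tgt w v

/-- The number of directed paths of length `n` in the graph starting at `v`. -/
noncomputable def pathCount (src tgt : E → V) (v : V) (n : ℕ) : ℕ :=
  Nat.card {l : List E // l.length = n ∧ IsDiPath src tgt l ∧ StartsAt src l v}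

/-- An infinite path in the graph. -/
def IsInfPath (src tgt : E → V) (p : ℕ → E) : Prop :=
  ∀ n : ℕ, tgt (p n) = src (p (n + 1))

/-- The vertex `v` is visited infinitely often by the infinite path `p`. -/
def VisitedInfOften (src : E → V) (p : ℕ → E) (v : V) : Prop :=
  ∀ N : ℕ, ∃ n ≥ N, src (p n) = v

/-- `v ≥ C`: the vertex `v` reaches some vertex on the cycle `C`. -/
def ReachesCycle (src tgt : E → V) (v : V) (l : List E) : Prop :=
  ∃ w : V, OnCycle src l w ∧ Reaches src tgt v w

/-- `C ≥ C'`: some vertex on the cycle `C` reaches the cycle `C'`. -/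
def CycleReachesCycle (src tgt : E → V) (l l' : List E) : Prop :=
  ∃ v : V, OnCycle src l v ∧ ReachesCycle src tgt v l'

/-- Two cycles are vertex-disjoint. -/
def CyclesDisjoint (src : E → V) (l l' : List E) : Prop :=
  ∀ v : V, ¬ (OnCycle src l v ∧ OnCycle src l' v)

/-- The vertex `v` lies on two distinct simple cycles. -/
def OnTwoCycles (src tgt : E → V) (v : V) : Prop :=
  ∃ l l' : List E, IsSimpleCycle src tgt l ∧ IsSimpleCycle src tgt l' ∧
    ¬ l.IsRotated l' ∧ OnCycle src l v ∧ OnCycle src l' v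

/-- The adjacency matrix of the graph, as a real matrix: the `(a, b)` entry is the
number of edges from `a` to `b`. -/
noncomputable def adjMatrix (src tgt : E → V) : Matrix V V ℝ :=
  Matrix.of fun a b => (Nat.card {e : E // src e = a ∧ tgt e = b} : ℝ)


section Helpers

variable (src tgt : E → V)

/-- A walk (possibly empty edge list) from `v` to `w`. -/
inductive Walk : V → V → List E → Prop
  | nil (v : V) : Walk v v []
  | cons (e : E) {w : V} {l : List E} : Walk (tgt e) w l → Walk (src e) w (e :: l)

variable {src tgt}

lemma Walk.append {v w x : V} {l₁ l₂ : List E} (h₁ : Walk src tgt v w l₁)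
    (h₂ : Walk src tgt w x l₂) : Walk src tgt v x (l₁ ++ l₂) := by
  induction h₁ with
  | nil => simpa
  | cons e h ih => exact Walk.cons e (ih h₂)

lemma Walk.split {v x : V} {l₁ l₂ : List E} (h : Walk src tgt v x (l₁ ++ l₂)) :
    ∃ w, Walk src tgt v w l₁ ∧ Walk src tgt w x l₂ := by
  induction l₁ generalizing v with
  | nil => exact ⟨v, Walk.nil v, h⟩
  | cons e t ih =>
    cases h with
    | cons _ h =>
      obtain ⟨w, hw1, hw2⟩ := ih h
      exact ⟨w, Walk.cons e hw1, hw2⟩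

lemma Walk.start {v w : V} {e : E} {l : List E} (h : Walk src tgt v w (e :: l)) :
    src e = v := by cases h; rfl

lemma Walk.eq_of_nil {v w : V} (h : Walk src tgt v w ([] : List E)) : v = w := by
  cases h; rfl

lemma Walk.tail {v w : V} {e : E} {l : List E} (h : Walk src tgt v w (e :: l)) :
    Walk src tgt (tgt e) w l := by cases h; assumption

lemma Walk.toPath {v w : V} {l : List E} (h : Walk src tgt v w l) (hne : l ≠ []) :
    IsDiPath src tgt l ∧ StartsAt src l v ∧ EndsAt tgt l w := by
  induction h with
  | nil => exact absurd rfl hne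
  | cons e h ih =>
    rename_i w' l'
    rcases eq_or_ne l' [] with rfl | hl
    · obtain rfl := h.eq_of_nil
      exact ⟨⟨by simp, by simp [List.Chain']⟩, by simp [StartsAt], by simp [EndsAt]⟩
    · obtain ⟨⟨-, hch⟩, hst, hen⟩ := ih hl
      obtain ⟨f, t, rfl⟩ := List.exists_cons_of_ne_nil hl
      refine ⟨⟨by simp, ?_⟩, by simp [StartsAt], ?_⟩
      · refine List.isChain_cons_cons.mpr ⟨?_, hch⟩
        simpa [StartsAt] using hst.symm
      · simpa [EndsAt, List.getLast?_cons_cons] using hen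

lemma Walk.ofPath {v w : V} {l : List E} (h : IsDiPath src tgt l)
    (hst : StartsAt src l v) (hen : EndsAt tgt l w) : Walk src tgt v w l := by
  obtain ⟨hne, hch⟩ := h
  clear hne
  induction l generalizing v w with
  | nil => simp [StartsAt] at hst
  | cons e t ih =>
    simp only [StartsAt, List.head?_cons, Option.map_some, Option.some.injEq] at hst
    subst hst
    rcases eq_or_ne t [] with rfl | ht
    · simp only [EndsAt, List.getLast?_singleton, Option.map_some, Option.some.injEq] at hen
      subst hen
      exact Walk.cons e (Walk.nil _)
    · obtain ⟨f, t', rfl⟩ := List.exists_cons_of_ne_nil ht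
      simp only [List.Chain', List.isChain_cons_cons] at hch
      refine Walk.cons e ?_
      rw [hch.1]
      exact ih (by simp [StartsAt]) (by simpa [EndsAt, List.getLast?_cons_cons] using hen) hch.2

lemma reaches_iff_walk {v w : V} :
    Reaches src tgt v w ↔ ∃ l : List E, Walk src tgt v w l := by
  constructor
  · rintro (rfl | ⟨l, hp, hst, hen⟩)
    · exact ⟨[], Walk.nil v⟩
    · exact ⟨l, Walk.ofPath hp hst hen⟩
  · rintro ⟨l, h⟩
    rcases eq_or_ne l [] with rfl | hl
    · exact Or.inl h.eq_of_nil
    · exact Or.inr ⟨l, h.toPath hl⟩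

lemma Reaches.trans {v w x : V} (h₁ : Reaches src tgt v w) (h₂ : Reaches src tgt w x) :
    Reaches src tgt v x := by
  rw [reaches_iff_walk] at *
  obtain ⟨l₁, h₁⟩ := h₁
  obtain ⟨l₂, h₂⟩ := h₂
  exact ⟨l₁ ++ l₂, h₁.append h₂⟩

lemma MutReach.symm {v w : V} (h : MutReach src tgt v w) : MutReach src tgt w v :=
  ⟨h.2, h.1⟩

lemma MutReach.trans {v w x : V} (h₁ : MutReach src tgt v w) (h₂ : MutReach src tgt w x) :
    MutReach src tgt v x :=
  ⟨h₁.1.trans h₂.1, h₂.2.trans h₁.2⟩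

/-- Splitting a walk at a member edge. -/
lemma Walk.mem_split {v w : V} {l : List E} (h : Walk src tgt v w l) {f : E} (hf : f ∈ l) :
    ∃ l₁ l₂, l = l₁ ++ f :: l₂ ∧ Walk src tgt v (src f) l₁ ∧
      Walk src tgt (src f) w (f :: l₂) := by
  obtain ⟨l₁, l₂, rfl⟩ := List.append_of_mem hf
  obtain ⟨u, h₁, h₂⟩ := h.split
  have := h₂.start
  subst this
  exact ⟨l₁, l₂, rfl, h₁, h₂⟩

lemma Walk.base_mem {v : V} {l : List E} (h : Walk src tgt v v l) (hne : l ≠ []) :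
    v ∈ l.map src := by
  obtain ⟨e, t, rfl⟩ := List.exists_cons_of_ne_nil hne
  simp [← h.start]

lemma closed_mutReach {u a : V} {l : List E} (h : Walk src tgt u u l)
    (ha : a ∈ l.map src) : MutReach src tgt a u := by
  obtain ⟨f, hfl, rfl⟩ := List.mem_map.mp ha
  obtain ⟨l₁, l₂, rfl, h₁, h₂⟩ := h.mem_split hfl
  exact ⟨reaches_iff_walk.mpr ⟨_, h₂⟩, reaches_iff_walk.mpr ⟨_, h₁⟩⟩

lemma tgt_mem_srcs {u : V} {l : List E} (h : Walk src tgt u u l) {f : E} (hf : f ∈ l) :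
    tgt f ∈ l.map src := by
  obtain ⟨l₁, l₂, rfl, h₁, h₂⟩ := h.mem_split hf
  have h₃ := h₂.tail
  rcases eq_or_ne l₂ [] with rfl | hl
  · obtain rfl := h₃.eq_of_nil
    exact h.base_mem (by simp)
  · obtain ⟨g, t, rfl⟩ := List.exists_cons_of_ne_nil hl
    have := h₃.start
    simp [← this]

lemma isSimpleCycle_of_walk {u : V} {l : List E} (h : Walk src tgt u u l) (hne : l ≠ [])
    (hnd : (l.map src).Nodup) : IsSimpleCycle src tgt l := by
  obtain ⟨hp, hst, hen⟩ := h.toPath hne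
  exact ⟨⟨hp, u, hst, hen⟩, hnd⟩

lemma IsSimpleCycle.exists_walk {l : List E} (h : IsSimpleCycle src tgt l) :
    ∃ u, Walk src tgt u u l ∧ l ≠ [] ∧ (l.map src).Nodup := by
  obtain ⟨⟨hp, u, hst, hen⟩, hnd⟩ := h
  exact ⟨u, Walk.ofPath hp hst hen, hp.1, hnd⟩

/-- Decomposition at a duplicate value of `g`. -/
lemma exists_dup_decomp {g : E → V} : ∀ {l : List E}, ¬ (l.map g).Nodup →
    ∃ (l₁ : List E) (e : E) (l₂ : List E) (f : E) (l₃ : List E),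
      l = l₁ ++ e :: l₂ ++ f :: l₃ ∧ g e = g f := by
  intro l
  induction l with
  | nil => simp
  | cons e t ih =>
    intro h
    rw [List.map_cons, List.nodup_cons] at h
    push_neg at h
    by_cases he : g e ∈ t.map g
    · obtain ⟨f, hft, hgf⟩ := List.mem_map.mp he
      obtain ⟨l₂, l₃, rfl⟩ := List.append_of_mem hft
      exact ⟨[], e, l₂, f, l₃, by simp, hgf.symm⟩
    · obtain ⟨l₁, a, l₂, f, l₃, rfl, hgf⟩ := ih (h he)
      exact ⟨e :: l₁, a, l₂, f, l₃, by simp, hgf⟩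

lemma rotated_mem_srcs {l l' : List E} (h : l.IsRotated l') {a : V} (ha : a ∈ l.map src) :
    a ∈ l'.map src := ((h.map src).perm).mem_iff.mp ha

lemma merge_cycles (nic : NoIntersectingCycles src tgt) {C₁ C₂ : List E}
    (h₁ : IsSimpleCycle src tgt C₁) (h₂ : IsSimpleCycle src tgt C₂) {x : V}
    (hx₁ : x ∈ C₁.map src) (hx₂ : x ∈ C₂.map src) : C₁.IsRotated C₂ := by
  by_contra hr
  exact nic C₁ C₂ h₁ h₂ hr x ⟨hx₁, hx₂⟩

/-- Main extraction lemma: from a closed walk and two of its vertices, extract,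
assuming no intersecting cycles, a simple cycle through both. -/
lemma main_cycle (nic : NoIntersectingCycles src tgt) :
    ∀ n : ℕ, ∀ l : List E, l.length ≤ n → ∀ v : V, Walk src tgt v v l → l ≠ [] →
      ∀ a b : V, a ∈ l.map src → b ∈ l.map src →
        ∃ C : List E, IsSimpleCycle src tgt C ∧ a ∈ C.map src ∧ b ∈ C.map src := by
  intro n
  induction n with
  | zero =>
    intro l hl v _ hne
    rw [Nat.le_zero, List.length_eq_zero_iff] at hl
    exact absurd hl hne
  | succ n ih =>
    intro l hl v hw hne a b ha hb
    by_cases hnd : (l.map src).Nodup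
    · exact ⟨l, isSimpleCycle_of_walk hw hne hnd, ha, hb⟩
    obtain ⟨l₁, e, l₂, f, l₃, rfl, hef⟩ := exists_dup_decomp hnd
    obtain ⟨x₁, hwa, hw₅⟩ := hw.split
    obtain rfl : src f = x₁ := hw₅.start
    obtain ⟨x₂, hw₁, hwM⟩ := hwa.split
    obtain rfl : src e = x₂ := hwM.start
    -- the inner closed walk `M = e :: l₂` based at `src e`
    have hM : Walk src tgt (src e) (src e) (e :: l₂) := by
      rwa [← hef] at hwM
    -- the outer closed walk `P = l₁ ++ f :: l₃` based at `v`
    have hP : Walk src tgt v v (l₁ ++ f :: l₃) := by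
      refine Walk.append ?_ hw₅
      rwa [hef] at hw₁
    have hlen : l₁.length + (l₂.length + (l₃.length + 1) + 1) ≤ n + 1 := by
      simpa using hl
    have hlenM : (e :: l₂).length ≤ n := by simp; omega
    have hlenP : (l₁ ++ f :: l₃).length ≤ n := by simp; omega
    have hcov : ∀ c : V, c ∈ ((l₁ ++ e :: l₂ ++ f :: l₃).map src) →
        c ∈ (l₁ ++ f :: l₃).map src ∨ c ∈ (e :: l₂).map src := by
      intro c hc
      simp only [List.map_append, List.map_cons, List.mem_append, List.mem_cons] at hc ⊢
      tauto
    have hxP : src f ∈ (l₁ ++ f :: l₃).map src := by simp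
    have hxM : src f ∈ (e :: l₂).map src := by simp [← hef]
    rcases hcov a ha with haP | haM <;> rcases hcov b hb with hbP | hbM
    · exact ih _ hlenP v hP (by simp) a b haP hbP
    · obtain ⟨C₁, hC₁, haC₁, hxC₁⟩ := ih _ hlenP v hP (by simp) a (src f) haP hxP
      obtain ⟨C₂, hC₂, hxC₂, hbC₂⟩ := ih _ hlenM (src e) hM (by simp) (src f) b hxM hbM
      have hrot := merge_cycles nic hC₂ hC₁ hxC₂ hxC₁
      exact ⟨C₁, hC₁, haC₁, rotated_mem_srcs hrot hbC₂⟩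
    · obtain ⟨C₁, hC₁, haC₁, hxC₁⟩ := ih _ hlenM (src e) hM (by simp) a (src f) haM hxM
      obtain ⟨C₂, hC₂, hxC₂, hbC₂⟩ := ih _ hlenP v hP (by simp) (src f) b hxP hbP
      have hrot := merge_cycles nic hC₂ hC₁ hxC₂ hxC₁
      exact ⟨C₁, hC₁, haC₁, rotated_mem_srcs hrot hbC₂⟩
    · exact ih _ hlenM (src e) hM (by simp) a b haM hbM

/-- From a closed walk starting with a fixed edge `f`, extract a simple cycle
containing `f`.  (No hypothesis needed.) -/
lemma cycle_with_edge :
    ∀ n : ℕ, ∀ q : List E, q.length ≤ n → ∀ f : E, Walk src tgt (tgt f) (src f) q →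
      ∃ C : List E, IsSimpleCycle src tgt C ∧ f ∈ C ∧ src f ∈ C.map src := by
  intro n
  induction n with
  | zero =>
    intro q hq f hwq
    rw [Nat.le_zero, List.length_eq_zero_iff] at hq
    subst hq
    exact ⟨[f], isSimpleCycle_of_walk (Walk.cons f hwq) (by simp) (by simp),
      by simp, by simp⟩
  | succ n ih =>
    intro q hq f hwq
    have hwC : Walk src tgt (src f) (src f) (f :: q) := Walk.cons f hwq
    by_cases hnd : ((f :: q).map src).Nodup
    · exact ⟨f :: q, isSimpleCycle_of_walk hwC (by simp) hnd, by simp, by simp⟩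
    obtain ⟨l₁, e, l₂, g, l₃, hdec, heg⟩ := exists_dup_decomp hnd
    cases l₁ with
    | nil =>
      simp only [List.nil_append, List.cons.injEq] at hdec
      obtain ⟨rfl, rfl⟩ := hdec
      obtain ⟨x, hw₁, hw₂⟩ := hwq.split
      obtain rfl : src g = x := hw₂.start
      rw [← heg] at hw₁
      refine ih l₂ ?_ f hw₁
      have : (l₂ ++ g :: l₃).length ≤ n + 1 := hq
      simp at this ⊢; omega
    | cons f' l₁' =>
      simp only [List.cons_append] at hdec
      injection hdec with h1 h2
      subst h1
      subst h2
      obtain ⟨x₁, hwa, hw₅⟩ := hwq.split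
      obtain rfl : src g = x₁ := hw₅.start
      obtain ⟨x₂, hw₁, hwM⟩ := hwa.split
      obtain rfl : src e = x₂ := hwM.start
      have hq' : Walk src tgt (tgt f) (src f) (l₁' ++ g :: l₃) := by
        refine Walk.append ?_ hw₅
        rwa [heg] at hw₁
      refine ih _ ?_ f hq'
      simp at hq ⊢; omega

lemma Walk.chain_getElem {v w : V} {l : List E} (h : Walk src tgt v w l) :
    ∀ i : ℕ, (hi : i + 1 < l.length) → tgt (l[i]) = src (l[i + 1]) := by
  induction h with
  | nil => intro i hi; simp at hi
  | cons e h ih =>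
    intro i hi
    rename_i w' l'
    match i with
    | 0 =>
      have hl : l' ≠ [] := by rintro rfl; simp at hi
      obtain ⟨f, t, rfl⟩ := List.exists_cons_of_ne_nil hl
      simpa using h.start.symm
    | Nat.succ j =>
      have := ih j (by simpa using hi)
      simpa using this

lemma Walk.tgt_getLast {v w : V} {l : List E} (h : Walk src tgt v w l) (hne : l ≠ []) :
    tgt (l.getLast hne) = w := by
  induction h with
  | nil => exact absurd rfl hne
  | cons e h ih =>
    rename_i w' l'
    rcases eq_or_ne l' [] with rfl | hl
    · simpa [List.getLast] using h.eq_of_nil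
    · rw [List.getLast_cons hl]
      exact ih hl

lemma closed_cyclic {u : V} {l : List E} (h : Walk src tgt u u l)
    (i j : ℕ) (hi : i < l.length) (hj : j < l.length) (hij : (i + 1) % l.length = j) :
    tgt (l[i]) = src (l[j]) := by
  subst hij
  rcases lt_or_ge (i + 1) l.length with h1 | h1
  · have : (i + 1) % l.length = i + 1 := Nat.mod_eq_of_lt h1
    simp only [this]
    exact h.chain_getElem i h1
  · have hi1 : i + 1 = l.length := by omega
    have hne : l ≠ [] := by rintro rfl; simp at hi
    have hmod : (i + 1) % l.length = 0 := by rw [hi1, Nat.mod_self]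
    simp only [hmod]
    have h2 : tgt (l.getLast hne) = u := h.tgt_getLast hne
    have h3 : l.getLast hne = l[l.length - 1] := List.getLast_eq_getElem hne
    have hieq : i = l.length - 1 := by omega
    subst hieq
    rw [← h3, h2]
    obtain ⟨e, t, rfl⟩ := List.exists_cons_of_ne_nil hne
    have h4 : src e = u := h.start
    simp [h4]

lemma subcycle_rotated {u w : V} {L l : List E}
    (hL : Walk src tgt u u L) (hLnd : (L.map src).Nodup)
    (hl : Walk src tgt w w l) (hlne : l ≠ []) (hlnd : (l.map src).Nodup)
    (hsub : ∀ f ∈ l, f ∈ L) : l.IsRotated L := by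
  have hm : 0 < l.length := List.length_pos_iff.mpr hlne
  have hLne : L ≠ [] := by
    rintro rfl
    exact absurd (hsub (l.head hlne) (List.head_mem hlne)) (by simp)
  have hn : 0 < L.length := List.length_pos_iff.mpr hLne
  have hinj : ∀ i j, (hi : i < L.length) → (hj : j < L.length) →
      src (L[i]) = src (L[j]) → i = j := by
    intro i j hi hj hij
    have h1 : (L.map src)[i]'(by simpa using hi) = (L.map src)[j]'(by simpa using hj) := by
      simpa using hij
    exact (List.Nodup.getElem_inj_iff hLnd).mp h1
  obtain ⟨i0, hi0, hL0⟩ := List.mem_iff_getElem.mp (hsub (l[0]) (List.getElem_mem hm))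
  have key : ∀ j, (hj : j < l.length) → ∀ k, (hk : k < L.length) →
      (i0 + j) % L.length = k → l[j] = L[k] := by
    intro j
    induction j with
    | zero =>
      intro hj k hk hjk
      rw [Nat.add_zero, Nat.mod_eq_of_lt hi0] at hjk
      subst hjk
      exact hL0.symm
    | succ j ihj =>
      intro hj k hk hjk
      have hj' : j < l.length := by omega
      have e1 : tgt (l[j]) = src (l[j + 1]) := hl.chain_getElem j hj
      have e2 : tgt (L[(i0 + j) % L.length]'(Nat.mod_lt _ hn)) = src (L[k]) := by
        refine closed_cyclic hL _ _ (Nat.mod_lt _ hn) hk ?_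
        rw [Nat.mod_add_mod, show i0 + j + 1 = i0 + (j + 1) from by omega]
        exact hjk
      rw [← ihj hj' _ (Nat.mod_lt _ hn) rfl] at e2
      obtain ⟨k', hk', hlk⟩ := List.mem_iff_getElem.mp (hsub (l[j + 1]) (List.getElem_mem hj))
      have e3 : src (L[k']) = src (L[k]) := by rw [hlk, ← e1, e2]
      obtain rfl := hinj k' k hk' hk e3
      exact hlk.symm
  -- closing up
  have e3 : tgt (l[l.length - 1]'(by omega)) = src (l[0]) :=
    closed_cyclic hl _ _ (by omega) hm (by rw [Nat.sub_add_cancel hm, Nat.mod_self])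
  have e4 : tgt (l[l.length - 1]'(by omega)) =
      src (L[(i0 + l.length) % L.length]'(Nat.mod_lt _ hn)) := by
    have h5 := closed_cyclic hL ((i0 + (l.length - 1)) % L.length)
      ((i0 + l.length) % L.length) (Nat.mod_lt _ hn) (Nat.mod_lt _ hn)
      (by rw [Nat.mod_add_mod]; congr 1; omega)
    rw [← key (l.length - 1) (by omega) _ (Nat.mod_lt _ hn) rfl] at h5
    exact h5
  have e5 : src (L[i0]) = src (L[(i0 + l.length) % L.length]'(Nat.mod_lt _ hn)) := by
    rw [hL0, ← e3, e4]
  have e6 : i0 = (i0 + l.length) % L.length := hinj _ _ hi0 (Nat.mod_lt _ hn) e5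
  have hr : l.length % L.length < L.length := Nat.mod_lt _ hn
  have hmod0 : l.length % L.length = 0 := by
    have h7 : (i0 + l.length % L.length) % L.length = i0 := by
      rw [Nat.add_mod_mod]
      exact e6.symm
    rcases Nat.lt_or_ge (i0 + l.length % L.length) L.length with hc | hc
    · rw [Nat.mod_eq_of_lt hc] at h7; omega
    · rw [Nat.mod_eq_sub_mod hc, Nat.mod_eq_of_lt (by omega)] at h7
      omega
  have hdvd : L.length ∣ l.length := Nat.dvd_of_mod_eq_zero hmod0
  have hmle : l.length ≤ L.length :=
    (List.Nodup.subperm (List.Nodup.of_map src hlnd) hsub).length_le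
  have hmeq : l.length = L.length :=
    le_antisymm hmle (Nat.le_of_dvd hm hdvd)
  refine List.IsRotated.symm ⟨i0, ?_⟩
  refine List.ext_getElem (by simp [hmeq]) ?_
  intro j h1 h2
  rw [List.getElem_rotate]
  exact (key j h2 _ (Nat.mod_lt _ hn) (by rw [Nat.add_comm])).symm

end Helpers

/-- A finite directed multigraph has no intersecting cycles if and only
if, for every strongly connected component containing at least one edge, the edges of
the component constitute exactly one simple cycle passing exactly once through each
vertex of the component. -/
theorem noIntersectingCycles_iff_scc_cyclic [Fintype V] [Fintype E] (src tgt : E → V) :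
    NoIntersectingCycles src tgt ↔
      ∀ v : V, (∃ e : E, MutReach src tgt (src e) v ∧ MutReach src tgt (tgt e) v) →
        ∃ l : List E, IsSimpleCycle src tgt l ∧ l.Nodup ∧
          (∀ e : E, e ∈ l ↔ (MutReach src tgt (src e) v ∧ MutReach src tgt (tgt e) v)) ∧
          (∀ w : V, OnCycle src l w ↔ MutReach src tgt w v) := by
  constructor
  · -- forward direction
    intro nic v hv
    obtain ⟨e, he1, he2⟩ := hv
    obtain ⟨p₁, hp₁⟩ := reaches_iff_walk.mp he1.2
    obtain ⟨p₂, hp₂⟩ := reaches_iff_walk.mp he2.1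
    have hP : Walk src tgt v v (p₁ ++ e :: p₂) := hp₁.append (Walk.cons e hp₂)
    have hPne : p₁ ++ e :: p₂ ≠ [] := by simp
    have hvP : v ∈ (p₁ ++ e :: p₂).map src := hP.base_mem hPne
    obtain ⟨L, hL, hvL, -⟩ := main_cycle nic _ _ le_rfl v hP hPne v v hvP hvP
    obtain ⟨uL, hwL, hLne, hLnd⟩ := hL.exists_walk
    have hvu : MutReach src tgt v uL := closed_mutReach hwL hvL
    have hvert : ∀ w : V, OnCycle src L w ↔ MutReach src tgt w v := by
      intro w
      constructor
      · intro hw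
        exact (closed_mutReach hwL hw).trans hvu.symm
      · intro hw
        obtain ⟨q₁, hq₁⟩ := reaches_iff_walk.mp hw.2
        obtain ⟨q₂, hq₂⟩ := reaches_iff_walk.mp hw.1
        have hQ : Walk src tgt v v (q₁ ++ q₂) := hq₁.append hq₂
        rcases eq_or_ne (q₁ ++ q₂) [] with hQe | hQne
        · rw [List.append_eq_nil_iff] at hQe
          obtain ⟨rfl, rfl⟩ := hQe
          obtain rfl := hq₁.eq_of_nil
          exact hvL
        · have hvQ : v ∈ (q₁ ++ q₂).map src := hQ.base_mem hQne
          have hwQ : w ∈ (q₁ ++ q₂).map src := by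
            rcases eq_or_ne q₂ [] with rfl | hq2ne
            · obtain rfl := hq₂.eq_of_nil
              exact hvQ
            · obtain ⟨g, t, rfl⟩ := List.exists_cons_of_ne_nil hq2ne
              have hg : src g = w := hq₂.start
              simp [← hg]
          obtain ⟨C, hC, hvC, hwC⟩ := main_cycle nic _ _ le_rfl v hQ hQne v w hvQ hwQ
          exact rotated_mem_srcs (merge_cycles nic hC hL hvC hvL) hwC
    have hedge : ∀ f : E, f ∈ L ↔
        (MutReach src tgt (src f) v ∧ MutReach src tgt (tgt f) v) := by
      intro f
      constructor
      · intro hf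
        exact ⟨(hvert _).mp (List.mem_map_of_mem (f := src) hf),
          (hvert _).mp (tgt_mem_srcs hwL hf)⟩
      · rintro ⟨hf1, hf2⟩
        have hre : Reaches src tgt (tgt f) (src f) := hf2.1.trans hf1.2
        obtain ⟨q, hq⟩ := reaches_iff_walk.mp hre
        obtain ⟨C, hC, hfC, hsC⟩ := cycle_with_edge q.length q le_rfl f hq
        have hsL : src f ∈ L.map src := (hvert _).mpr hf1
        exact (merge_cycles nic hC hL hsC hsL).perm.mem_iff.mp hfC
    exact ⟨L, hL, List.Nodup.of_map src hL.2, hedge, hvert⟩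
  · -- backward direction
    intro H l l' hl hl' hrot v hv
    obtain ⟨hvl, hvl'⟩ := hv
    obtain ⟨u, hwl, hlne, hlnd⟩ := hl.exists_walk
    obtain ⟨u', hwl', hlne', hlnd'⟩ := hl'.exists_walk
    have hvu : MutReach src tgt v u := closed_mutReach hwl hvl
    have hvu' : MutReach src tgt v u' := closed_mutReach hwl' hvl'
    have hmem : ∀ f ∈ l, MutReach src tgt (src f) v ∧ MutReach src tgt (tgt f) v :=
      fun f hf => ⟨(closed_mutReach hwl (List.mem_map_of_mem (f := src) hf)).trans hvu.symm,
        (closed_mutReach hwl (tgt_mem_srcs hwl hf)).trans hvu.symm⟩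
    have hmem' : ∀ f ∈ l', MutReach src tgt (src f) v ∧ MutReach src tgt (tgt f) v :=
      fun f hf => ⟨(closed_mutReach hwl' (List.mem_map_of_mem (f := src) hf)).trans hvu'.symm,
        (closed_mutReach hwl' (tgt_mem_srcs hwl' hf)).trans hvu'.symm⟩
    obtain ⟨e, he⟩ : ∃ e, e ∈ l := List.exists_mem_of_ne_nil l hlne
    obtain ⟨L, hLc, hLnd, hLe, hLv⟩ := H v ⟨e, hmem e he⟩
    obtain ⟨uL, hwL, hLne, hLsnd⟩ := hLc.exists_walk
    have h1 : l.IsRotated L :=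
      subcycle_rotated hwL hLsnd hwl hlne hlnd (fun f hf => (hLe f).mpr (hmem f hf))
    have h2 : l'.IsRotated L :=
      subcycle_rotated hwL hLsnd hwl' hlne' hlnd' (fun f hf => (hLe f).mpr (hmem' f hf))
    exact hrot (h1.trans h2.symm)
end

section
/- Let v be a vertex of a finite directed multigraph G. There exist c > 1 and N ∈ ℕ with |Path_G(v,n)| ≥ cⁿ for all n ≥ N if and only if there is a vertex w with v ≥ w such that w lies on two distinct simple cycles of G. -/
open Filter Topology

variable {V E : Type*}

section AuxLemmas

namespace ExpGrowthAux

variable {V E : Type*} {src tgt : E → V} {v w : V}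

/-- Every edge in `l.head?` has source `w` (vacuous for `[]`). -/
def HeadSrc (src : E → V) (w : V) (l : List E) : Prop := ∀ e ∈ l.head?, src e = w

/-- Every edge in `l.getLast?` has target `w` (vacuous for `[]`). -/
def LastTgt (tgt : E → V) (w : V) (l : List E) : Prop := ∀ e ∈ l.getLast?, tgt e = w

/-- A (possibly empty) closed walk based at `w`. -/
def LoopAt (src tgt : E → V) (w : V) (l : List E) : Prop :=
  l.Chain' (fun e f => tgt e = src f) ∧ HeadSrc src w l ∧ LastTgt tgt w l

lemma HeadSrc.append (h₁ : HeadSrc src w l₁) (h₂ : HeadSrc src w l₂) :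
    HeadSrc src w (l₁ ++ l₂) := by
  cases l₁ with
  | nil => simpa using h₂
  | cons a t => simpa [HeadSrc] using h₁

lemma LastTgt.append (h₁ : LastTgt tgt w l₁) (h₂ : LastTgt tgt w l₂) :
    LastTgt tgt w (l₁ ++ l₂) := by
  rcases eq_or_ne l₂ [] with rfl | h
  · simpa using h₁
  · intro e he
    rw [List.getLast?_append] at he
    rw [List.getLast?_eq_getLast h] at he
    exact h₂ e (by simp [List.getLast?_eq_getLast h, by simpa using he])

lemma LoopAt.append (h₁ : LoopAt src tgt w l₁) (h₂ : LoopAt src tgt w l₂) :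
    LoopAt src tgt w (l₁ ++ l₂) := by
  refine ⟨List.isChain_append.2 ⟨h₁.1, h₂.1, ?_⟩, h₁.2.1.append h₂.2.1, h₁.2.2.append h₂.2.2⟩
  intro x hx y hy
  rw [h₁.2.2 x hx, h₂.2.1 y hy]

end ExpGrowthAux

end AuxLemmas
section AuxLemmas2

namespace ExpGrowthAux

variable {V E : Type*} {src tgt : E → V} {v w : V} {l : List E}

lemma chain'_getElem {α : Type*} {R : α → α → Prop} {l : List α} (h : l.Chain' R)
    {i : ℕ} (hi : i + 1 < l.length) : R l[i] l[i+1] := by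
  rw [List.Chain', List.isChain_iff_getElem] at h
  exact h i (by omega)

lemma chain'_getElem' {α : Type*} {R : α → α → Prop} {l : List α} (h : l.Chain' R)
    {i j : ℕ} (hij : i + 1 = j) (hj : j < l.length) : R l[i] l[j] := by
  subst hij; exact chain'_getElem h hj

lemma startsAt_iff : StartsAt src l v ↔ ∃ e, l.head? = some e ∧ src e = v := by
  simp [StartsAt, Option.map_eq_some_iff]

lemma endsAt_iff : EndsAt tgt l w ↔ ∃ e, l.getLast? = some e ∧ tgt e = w := by
  simp [EndsAt, Option.map_eq_some_iff]

lemma loopAt_of_closed (h : IsClosedDiPath src tgt l) (hs : StartsAt src l v) :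
    LoopAt src tgt v l := by
  obtain ⟨⟨hne, hch⟩, u, hsu, heu⟩ := h
  obtain ⟨e, he, hev⟩ := startsAt_iff.1 hs
  obtain ⟨e', he', he'u⟩ := startsAt_iff.1 hsu
  obtain ⟨f, hf, hfu⟩ := endsAt_iff.1 heu
  have : u = v := by rw [he] at he'; cases he'; rw [← hev, he'u]
  subst this
  refine ⟨hch, ?_, ?_⟩
  · intro x hx; rw [he] at hx; cases hx; exact hev
  · intro x hx; rw [hf] at hx; cases hx; exact hfu

lemma IsSimpleCycle.rotate (h : IsSimpleCycle src tgt l) (k : ℕ) :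
    IsSimpleCycle src tgt (l.rotate k) := by
  obtain ⟨⟨⟨hne, hch⟩, u, hs, he⟩, hnd⟩ := h
  have hlen : 0 < l.length := List.length_pos_iff.2 hne
  have hndrot : ((l.rotate k).map src).Nodup := by
    rw [List.map_rotate]
    exact (List.IsRotated.nodup_iff ⟨k, rfl⟩).1 hnd
  rw [← List.rotate_mod]
  rw [← List.rotate_mod] at hndrot
  set k' := k % l.length with hk'
  have hk'lt : k' < l.length := Nat.mod_lt _ hlen
  rcases Nat.eq_zero_or_pos k' with h0 | hpos
  · rw [h0, List.rotate_zero] at hndrot ⊢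
    exact ⟨⟨⟨hne, hch⟩, u, hs, he⟩, hndrot⟩
  obtain ⟨e₀, he₀, he₀u⟩ := startsAt_iff.1 hs
  obtain ⟨f₀, hf₀, hf₀u⟩ := endsAt_iff.1 he
  have hrot := List.rotate_eq_drop_append_take (le_of_lt hk'lt)
  have hdropne : l.drop k' ≠ [] := by
    simp only [ne_eq, List.drop_eq_nil_iff]; omega
  have htakene : l.take k' ≠ [] := by
    simp only [ne_eq, List.take_eq_nil_iff]
    push_neg; exact ⟨by omega, hne⟩
  have hchrot : (l.rotate k').Chain' (fun e f => tgt e = src f) := by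
    rw [hrot, List.Chain', List.isChain_append]
    refine ⟨hch.drop _, hch.take _, ?_⟩
    intro x hx y hy
    rw [List.getLast?_drop, if_neg (by omega), hf₀] at hx
    cases hx
    have : (l.take k').head? = l.head? := by
      rw [List.head?_eq_getElem?, List.head?_eq_getElem?, List.getElem?_take]
      rw [if_pos hpos]
    rw [this, he₀] at hy
    cases hy
    rw [hf₀u, he₀u]
  have hheadrot : (l.rotate k').head? = some l[k'] := by
    rw [List.head?_rotate hk'lt, List.getElem?_eq_getElem hk'lt]
  refine ⟨⟨⟨?_, hchrot⟩, src l[k'], ?_, ?_⟩, hndrot⟩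
  · intro hc
    have := List.length_rotate l k'
    rw [hc] at this
    simp at this; omega
  · rw [StartsAt, hheadrot]; rfl
  · rw [EndsAt, hrot, List.getLast?_append]
    have hlast : (l.take k').getLast? = some l[k'-1] := by
      rw [List.getLast?_eq_getElem?, List.length_take]
      have hmin : min k' l.length - 1 = k' - 1 := by omega
      rw [hmin, List.getElem?_take, if_pos (by omega),
        List.getElem?_eq_getElem (by omega)]
    rw [hlast]
    simp only [Option.some_or, Option.map_some]
    have hstep : tgt l[k'-1] = src l[k'] := chain'_getElem' hch (by omega) hk'lt
    rw [hstep]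

end ExpGrowthAux

end AuxLemmas2
section AuxLemmas3

namespace ExpGrowthAux

variable {V E : Type*} {src tgt : E → V} {v w : V} {l : List E} {e e' : E}

lemma getLast?_take' {α : Type*} {l : List α} {j : ℕ} (h0 : 0 < j) (hj : j ≤ l.length) :
    (l.take j).getLast? = some (l[j-1]'(by omega)) := by
  rw [List.getLast?_eq_getElem?, List.length_take]
  have hmin : min j l.length - 1 = j - 1 := by omega
  rw [hmin, List.getElem?_take, if_pos (by omega), List.getElem?_eq_getElem (by omega)]

lemma head?_take' {α : Type*} {l : List α} {j : ℕ} (h0 : 0 < j) :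
    (l.take j).head? = l.head? := by
  rw [List.head?_eq_getElem?, List.head?_eq_getElem?, List.getElem?_take, if_pos h0]

lemma getElem_zero_of_head? (he : l.head? = some e) (h : 0 < l.length) : l[0] = e := by
  rw [List.head?_eq_getElem?, List.getElem?_eq_getElem h] at he
  exact Option.some_inj.1 he

lemma exists_simpleCycle_head_aux :
    ∀ n (l : List E), l.length = n → IsClosedDiPath src tgt l →
      ∀ e, l.head? = some e → ∃ C, IsSimpleCycle src tgt C ∧ C.head? = some e := by
  intro n
  induction n using Nat.strong_induction_on with
  | _ n ih =>
    intro l hlen hcl e he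
    by_cases hnd : (l.map src).Nodup
    · exact ⟨l, ⟨hcl, hnd⟩, he⟩
    obtain ⟨⟨hne, hch⟩, u, hsu, heu⟩ := hcl
    have hlpos : 0 < l.length := List.length_pos_iff.2 hne
    have hex : ∃ i j, ∃ (hi : i < l.length) (hj : j < l.length), i < j ∧
        src (l[i]'hi) = src (l[j]'hj) := by
      rw [List.nodup_iff_injective_get, Function.not_injective_iff] at hnd
      obtain ⟨a, b, hab, hne'⟩ := hnd
      have ha : (a : ℕ) < l.length := by have := a.2; simpa using this
      have hb : (b : ℕ) < l.length := by have := b.2; simpa using this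
      have hval : src (l[(a : ℕ)]'ha) = src (l[(b : ℕ)]'hb) := by
        simpa using hab
      rcases lt_or_gt_of_ne (Fin.val_ne_of_ne hne') with h | h
      · exact ⟨a, b, ha, hb, h, hval⟩
      · exact ⟨b, a, hb, ha, h, hval.symm⟩
    obtain ⟨i, j, hilt, hjlt, hij, hsrcij⟩ := hex
    have hue : u = src e := by
      obtain ⟨e₀, he₀, he₀u⟩ := startsAt_iff.1 hsu
      rw [he₀] at he; cases he; rw [he₀u]
    obtain ⟨f₀, hf₀, hf₀u⟩ := endsAt_iff.1 heu
    rcases Nat.eq_zero_or_pos i with rfl | hipos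
    · -- cut the tail: take the closed path l.take j
      have h0j : 0 < j := hij
      have hl0 : l[0] = e := getElem_zero_of_head? he hlpos
      refine ih j (by omega) (l.take j) (by rw [List.length_take]; omega)
        ⟨⟨?_, hch.take _⟩, src e, ?_, ?_⟩ e (by rw [head?_take' h0j, he])
      · intro hc
        have h1 := congrArg List.length hc
        rw [List.length_take] at h1
        simp only [List.length_nil] at h1
        omega
      · rw [StartsAt, head?_take' h0j, he]; rfl
      · rw [EndsAt, getLast?_take' h0j (by omega), Option.map_some]
        have hstep : tgt (l[j-1]'(by omega)) = src (l[j]'hjlt) :=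
          chain'_getElem' hch (by omega) hjlt
        rw [hstep, ← hsrcij, hl0]
    · -- cut the middle: l.take i ++ l.drop j
      set l' := l.take i ++ l.drop j with hl'
      have hlen' : l'.length = i + (l.length - j) := by
        simp [hl', List.length_take, List.length_drop]; omega
      have hdropne : l.drop j ≠ [] := by
        simp only [ne_eq, List.drop_eq_nil_iff]; omega
      refine ih l'.length (by omega) l' rfl ⟨⟨?_, ?_⟩, src e, ?_, ?_⟩ e ?_
      · intro hc; rw [hc] at hlen'; simp at hlen'; omega
      · rw [hl', List.Chain', List.isChain_append]
        refine ⟨hch.take _, hch.drop _, ?_⟩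
        intro x hx y hy
        rw [getLast?_take' hipos (by omega)] at hx
        cases hx
        rw [List.head?_drop, List.getElem?_eq_getElem hjlt] at hy
        cases hy
        have hstep : tgt (l[i-1]'(by omega)) = src (l[i]'(by omega)) :=
          chain'_getElem' hch (by omega) (by omega)
        rw [hstep, hsrcij]
      · rw [StartsAt, hl', List.head?_append, head?_take' hipos, he]; rfl
      · rw [EndsAt, hl', List.getLast?_append, List.getLast?_drop, if_neg (by omega), hf₀]
        simp only [Option.some_or, Option.map_some]
        rw [hf₀u, hue]
      · rw [hl', List.head?_append, head?_take' hipos, he]; rfl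

lemma exists_simpleCycle_head (hcl : IsClosedDiPath src tgt l) (he : l.head? = some e) :
    ∃ C, IsSimpleCycle src tgt C ∧ C.head? = some e :=
  exists_simpleCycle_head_aux l.length l rfl hcl e he

/-- An edge is *forced* if it is the first edge of some simple cycle. -/
def Forced (src tgt : E → V) (e : E) : Prop :=
  ∃ C, IsSimpleCycle src tgt C ∧ C.head? = some e

lemma rotated_head_eq {C C' : List E} (h : IsSimpleCycle src tgt C) (hrot : C.IsRotated C')
    (he : C.head? = some e) (he' : C'.head? = some e') (hsrc : src e = src e') : e = e' := by
  obtain ⟨k, rfl⟩ := hrot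
  have hne : C ≠ [] := h.1.1.1
  have hlen : 0 < C.length := List.length_pos_iff.2 hne
  rw [← List.rotate_mod] at he'
  have hk : k % C.length < C.length := Nat.mod_lt _ hlen
  rw [List.head?_rotate hk, List.getElem?_eq_getElem hk] at he'
  have h0 : C[0] = e := getElem_zero_of_head? he hlen
  have hCk : C[k % C.length] = e' := Option.some_inj.1 he'
  have hmape : (C.map src)[0]'(by simpa using hlen) =
      (C.map src)[k % C.length]'(by simpa using hk) := by
    simp only [List.getElem_map]
    rw [h0, hCk, hsrc]
  have h0k : (0 : ℕ) = k % C.length := (h.2.getElem_inj_iff).1 hmape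
  rw [← h0, ← hCk]
  congr 1

lemma forced_unique (H : ∀ w, Reaches src tgt v w → ¬ OnTwoCycles src tgt w)
    (hreach : Reaches src tgt v (src e)) (hsrc : src e = src e')
    (hf : Forced src tgt e) (hf' : Forced src tgt e') : e = e' := by
  obtain ⟨C, hC, he⟩ := hf
  obtain ⟨C', hC', he'⟩ := hf'
  have hone : OnCycle src C (src e) := by
    have : e ∈ C := List.mem_of_mem_head? (by rw [he]; rfl)
    exact List.mem_map_of_mem this
  have hone' : OnCycle src C' (src e) := by
    have : e' ∈ C' := List.mem_of_mem_head? (by rw [he']; rfl)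
    rw [hsrc]
    exact List.mem_map_of_mem this
  by_cases hrot : C.IsRotated C'
  · exact rotated_head_eq hC hrot he he' hsrc
  · exact absurd ⟨C, C', hC, hC', hrot, hone, hone'⟩ (H _ hreach)

lemma reach_src (hch : l.Chain' (fun e f => tgt e = src f)) (hs : StartsAt src l v)
    {i : ℕ} (hi : i < l.length) : Reaches src tgt v (src l[i]) := by
  obtain ⟨e₀, he₀, he₀v⟩ := startsAt_iff.1 hs
  rcases Nat.eq_zero_or_pos i with rfl | hipos
  · left
    rw [getElem_zero_of_head? he₀ (by omega), he₀v]
  · right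
    refine ⟨l.take i, ⟨?_, hch.take _⟩, ?_, ?_⟩
    · intro hc
      have h1 := congrArg List.length hc
      rw [List.length_take] at h1
      simp only [List.length_nil] at h1
      omega
    · rw [StartsAt, head?_take' hipos, he₀, Option.map_some, he₀v]
    · rw [EndsAt, getLast?_take' hipos (by omega), Option.map_some]
      rw [chain'_getElem' hch (i := i - 1) (j := i) (by omega) hi]

lemma forced_of_dup (hch : l.Chain' (fun e f => tgt e = src f))
    {i j : ℕ} (hij : i < j) (hj : j < l.length) (heq : l[i]'(by omega) = l[j]) :
    Forced src tgt (l[i]'(by omega)) := by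
  set C := (l.drop i).take (j - i) with hC
  have hdlen : (l.drop i).length = l.length - i := List.length_drop
  have hClen : C.length = j - i := by
    rw [hC, List.length_take, hdlen]; omega
  have hChead : C.head? = some (l[i]'(by omega)) := by
    rw [hC, head?_take' (by omega), List.head?_drop,
      List.getElem?_eq_getElem (show i < l.length by omega)]
  have hClast : C.getLast? = some (l[j-1]'(by omega)) := by
    rw [hC, getLast?_take' (by omega) (by omega)]
    congr 1
    rw [List.getElem_drop]
    congr 1
    omega
  have hcl : IsClosedDiPath src tgt C := by
    refine ⟨⟨?_, (hch.drop _).take _⟩, src (l[i]'(by omega)), ?_, ?_⟩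
    · intro hc; rw [hc] at hClen; simp at hClen; omega
    · rw [StartsAt, hChead]; rfl
    · rw [EndsAt, hClast, Option.map_some]
      have hstep : tgt (l[j-1]'(by omega)) = src (l[j]'hj) :=
        chain'_getElem' hch (by omega) hj
      rw [hstep, ← heq]
  obtain ⟨D, hD, hDhead⟩ := exists_simpleCycle_head hcl hChead
  exact ⟨D, hD, hDhead⟩

end ExpGrowthAux

end AuxLemmas3
section AuxLemmas4

namespace ExpGrowthAux

variable {V E : Type*} {src tgt : E → V} {v w : V} {l : List E} {e e' : E}

lemma indexOf_eq_of_not_forced [DecidableEq E]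
    (hch : l.Chain' (fun e f => tgt e = src f)) {i : ℕ} (hi : i < l.length)
    (hnf : ¬ Forced src tgt (l[i]'hi)) : List.idxOf (l[i]'hi) l = i := by
  have hmem : l[i]'hi ∈ l := List.getElem_mem hi
  have hidx : List.idxOf (l[i]'hi) l < l.length := List.idxOf_lt_length_iff.2 hmem
  have hgot : l[List.idxOf (l[i]'hi) l] = l[i]'hi := List.getElem_idxOf hidx
  rcases lt_trichotomy (List.idxOf (l[i]'hi) l) i with h | h | h
  · have hforced := forced_of_dup hch h hi hgot
    rw [hgot] at hforced
    exact absurd hforced hnf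
  · exact h
  · exact absurd (forced_of_dup hch h hidx hgot.symm) hnf

open Classical in
/-- Encode a path by recording, for each non-forced edge, the unique position at
which it occurs. -/
noncomputable def enc (src tgt : E → V) (v : V) (n : ℕ)
    (p : {l : List E // l.length = n ∧ IsDiPath src tgt l ∧ StartsAt src l v})
    (e : E) : Option (Fin n) :=
  if h : ¬ Forced src tgt e ∧ e ∈ p.1 then
    some ⟨List.idxOf e p.1, by
      have h2 := List.idxOf_lt_length_iff.2 h.2
      have h3 := p.2.1
      omega⟩
  else none

lemma enc_injective (H : ∀ w, Reaches src tgt v w → ¬ OnTwoCycles src tgt w) (n : ℕ) :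
    Function.Injective (enc src tgt v n) := by
  classical
  rintro ⟨l, hlen, ⟨hne, hch⟩, hsta⟩ ⟨l', hlen', ⟨hne', hch'⟩, hsta'⟩ h
  have hfun : ∀ e, enc src tgt v n ⟨l, hlen, ⟨hne, hch⟩, hsta⟩ e =
      enc src tgt v n ⟨l', hlen', ⟨hne', hch'⟩, hsta'⟩ e := fun e => congrFun h e
  suffices hll : l = l' by exact Subtype.ext hll
  refine List.ext_getElem (by omega) ?_
  intro i hi hi'
  induction i using Nat.strong_induction_on with
  | _ i ihk =>
  -- the sources at position i agree
  have hsrceq : src (l[i]'hi) = src (l'[i]'hi') := by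
    rcases Nat.eq_zero_or_pos i with rfl | hip
    · obtain ⟨e₀, he₀, he₀v⟩ := startsAt_iff.1 hsta
      obtain ⟨e₁, he₁, he₁v⟩ := startsAt_iff.1 hsta'
      rw [getElem_zero_of_head? he₀ (by omega), getElem_zero_of_head? he₁ (by omega),
        he₀v, he₁v]
    · have h1 : l[i-1]'(by omega) = l'[i-1]'(by omega) :=
        ihk (i-1) (by omega) (by omega) (by omega)
      have s1 : tgt (l[i-1]'(by omega)) = src (l[i]'hi) :=
        chain'_getElem' hch (by omega) hi
      have s2 : tgt (l'[i-1]'(by omega)) = src (l'[i]'hi') :=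
        chain'_getElem' hch' (by omega) hi'
      rw [← s1, ← s2, h1]
  by_cases hf : Forced src tgt (l[i]'hi)
  · by_cases hf' : Forced src tgt (l'[i]'hi')
    · -- both forced: uniqueness of forced continuation
      exact forced_unique H (reach_src hch hsta hi) hsrceq hf hf'
    · -- l'[i] is not forced
      have hidx' : List.idxOf (l'[i]'hi') l' = i := indexOf_eq_of_not_forced hch' hi' hf'
      have h1 : enc src tgt v n ⟨l', hlen', ⟨hne', hch'⟩, hsta'⟩ (l'[i]'hi') =
          some ⟨i, by omega⟩ := by
        rw [enc, dif_pos ⟨hf', List.getElem_mem hi'⟩]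
        exact congrArg some (Fin.ext hidx')
      have h2 := hfun (l'[i]'hi')
      rw [h1] at h2
      by_cases hc : ¬ Forced src tgt (l'[i]'hi') ∧ (l'[i]'hi') ∈ l
      · rw [enc, dif_pos hc] at h2
        have h3 : List.idxOf (l'[i]'hi') l = i := by
          have := Option.some_inj.1 h2
          exact congrArg Fin.val this
        have h4 : l[List.idxOf (l'[i]'hi') l]'(by omega) = l'[i]'hi' :=
          List.getElem_idxOf (by omega)
        have h5 : l[i]'hi = l[List.idxOf (l'[i]'hi') l]'(by omega) := by
          congr 1
          omega
        exact h5.trans h4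
      · rw [enc, dif_neg hc] at h2
        exact absurd h2 (by simp)
  · -- l[i] is not forced
    have hidx : List.idxOf (l[i]'hi) l = i := indexOf_eq_of_not_forced hch hi hf
    have h1 : enc src tgt v n ⟨l, hlen, ⟨hne, hch⟩, hsta⟩ (l[i]'hi) =
        some ⟨i, by omega⟩ := by
      rw [enc, dif_pos ⟨hf, List.getElem_mem hi⟩]
      exact congrArg some (Fin.ext hidx)
    have h2 := hfun (l[i]'hi)
    rw [h1] at h2
    by_cases hc : ¬ Forced src tgt (l[i]'hi) ∧ (l[i]'hi) ∈ l'
    · rw [enc, dif_pos hc] at h2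
      have h3 : List.idxOf (l[i]'hi) l' = i := by
        have := Option.some_inj.1 h2.symm
        exact congrArg Fin.val this
      have h4 : l'[List.idxOf (l[i]'hi) l']'(by omega) = l[i]'hi :=
        List.getElem_idxOf (by omega)
      have h5 : l'[i]'hi' = l'[List.idxOf (l[i]'hi) l']'(by omega) := by
        congr 1
        omega
      exact (h5.trans h4).symm
    · rw [enc, dif_neg hc] at h2
      exact absurd h2.symm (by simp)

lemma pathCount_le [Fintype E] (H : ∀ w, Reaches src tgt v w → ¬ OnTwoCycles src tgt w)
    (n : ℕ) : pathCount src tgt v n ≤ (n + 1) ^ (Fintype.card E) := by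
  classical
  have hcard : Nat.card (E → Option (Fin n)) = (n + 1) ^ (Fintype.card E) := by
    rw [Nat.card_eq_fintype_card, Fintype.card_fun, Fintype.card_option, Fintype.card_fin]
  rw [pathCount, ← hcard]
  exact Nat.card_le_card_of_injective _ (enc_injective H n)

end ExpGrowthAux

end AuxLemmas4
section AuxLemmas5

namespace ExpGrowthAux

variable {V E : Type*} {src tgt : E → V} {v w : V} {l : List E} {e e' : E}

lemma headSrc_of_startsAt (h : StartsAt src l v) : HeadSrc src v l := by
  obtain ⟨e₀, he₀, he₀v⟩ := startsAt_iff.1 h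
  intro x hx; rw [he₀] at hx; cases hx; exact he₀v

lemma lastTgt_of_endsAt (h : EndsAt tgt l w) : LastTgt tgt w l := by
  obtain ⟨e₀, he₀, he₀v⟩ := endsAt_iff.1 h
  intro x hx; rw [he₀] at hx; cases hx; exact he₀v

lemma startsAt_of_headSrc (h : HeadSrc src w l) (hne : l ≠ []) : StartsAt src l w := by
  rw [StartsAt, List.head?_eq_head hne, Option.map_some]
  rw [h (l.head hne) (by rw [List.head?_eq_head hne]; rfl)]

lemma exists_loop_rep {C : List E} (hC : IsSimpleCycle src tgt C) (hw : OnCycle src C w) :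
    ∃ R, IsSimpleCycle src tgt R ∧ C.IsRotated R ∧ StartsAt src R w := by
  obtain ⟨i, hilt, hi⟩ := List.mem_iff_getElem.1 hw
  rw [List.length_map] at hilt
  refine ⟨C.rotate i, IsSimpleCycle.rotate hC i, ⟨i, rfl⟩, ?_⟩
  rw [StartsAt, List.head?_rotate hilt, List.getElem?_eq_getElem hilt, Option.map_some]
  congr 1
  rw [← hi, List.getElem_map]

lemma blocks_ne {R1 R2 : List E} (hR1 : IsSimpleCycle src tgt R1)
    (hR2 : IsSimpleCycle src tgt R2) (hrot : ¬ R1.IsRotated R2) :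
    R1 ++ R2 ≠ R2 ++ R1 := by
  intro heq
  have ha : 0 < R1.length := List.length_pos_iff.2 hR1.1.1.1
  have hb : 0 < R2.length := List.length_pos_iff.2 hR2.1.1.1
  rcases lt_trichotomy R1.length R2.length with h | h | h
  · -- R1 shorter: R2 would repeat a source
    have e1 : (R1 ++ R2)[R1.length]'(by simp; omega) = R2[0]'hb := by
      rw [List.getElem_append_right (le_refl R1.length)]
      congr 1
      omega
    have e2 : (R2 ++ R1)[R1.length]'(by simp; omega) = R2[R1.length]'h :=
      List.getElem_append_left h
    have e3 : R2[0]'hb = R2[R1.length]'h := by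
      rw [← e1, ← e2]
      exact List.getElem_of_eq heq _
    have e4 : (R2.map src)[0]'(by simpa using hb) =
        (R2.map src)[R1.length]'(by simpa using h) := by
      simp only [List.getElem_map]
      rw [e3]
    have := (hR2.2.getElem_inj_iff).1 e4
    omega
  · -- equal lengths: R1 = R2
    have h1 : R1 = R2 := by
      have h2 := congrArg (List.take R1.length) heq
      rw [List.take_left] at h2
      rw [h2, h, List.take_left]
    exact hrot (h1 ▸ List.IsRotated.refl R1)
  · -- R2 shorter: R1 would repeat a source
    have e1 : (R2 ++ R1)[R2.length]'(by simp; omega) = R1[0]'ha := by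
      rw [List.getElem_append_right (le_refl R2.length)]
      congr 1
      omega
    have e2 : (R1 ++ R2)[R2.length]'(by simp; omega) = R1[R2.length]'h :=
      List.getElem_append_left h
    have e3 : R1[0]'ha = R1[R2.length]'h := by
      rw [← e1, ← e2]
      exact (List.getElem_of_eq heq _).symm
    have e4 : (R1.map src)[0]'(by simpa using ha) =
        (R1.map src)[R2.length]'(by simpa using h) := by
      simp only [List.getElem_map]
      rw [e3]
    have := (hR1.2.getElem_inj_iff).1 e4
    omega

lemma join_blocks_inj {B1 B2 : List E} (hL : B1.length = B2.length) (hne : B1 ≠ B2) :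
    ∀ s s' : List Bool, s.length = s'.length →
      (s.map fun b => if b then B1 else B2).flatten =
        (s'.map fun b => if b then B1 else B2).flatten → s = s' := by
  intro s
  induction s with
  | nil =>
    intro s' hlen _
    cases s' with
    | nil => rfl
    | cons a t => simp at hlen
  | cons a t ih =>
    intro s' hlen heq
    cases s' with
    | nil => simp at hlen
    | cons a' t' =>
      simp only [List.map_cons, List.flatten_cons] at heq
      have hfl : (if a then B1 else B2).length = (if a' then B1 else B2).length := by
        cases a <;> cases a' <;> simp [hL]
      obtain ⟨h1, h2⟩ := List.append_inj heq hfl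
      have haa : a = a' := by
        cases a <;> cases a' <;> simp_all
      rw [haa, ih t' (by simpa using hlen) h2]

lemma join_blocks_length {B1 B2 : List E} {L : ℕ} (h1 : B1.length = L) (h2 : B2.length = L)
    (s : List Bool) : ((s.map fun b => if b then B1 else B2).flatten).length = s.length * L := by
  induction s with
  | nil => simp
  | cons a t ih =>
    simp only [List.map_cons, List.flatten_cons, List.length_append, ih, List.length_cons]
    cases a <;> simp [h1, h2] <;> ring

lemma join_blocks_loopAt {B1 B2 : List E} (h1 : LoopAt src tgt w B1) (h2 : LoopAt src tgt w B2)
    (s : List Bool) : LoopAt src tgt w ((s.map fun b => if b then B1 else B2).flatten) := by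
  induction s with
  | nil => exact ⟨List.isChain_nil, by intro e he; simp at he, by intro e he; simp at he⟩
  | cons a t ih =>
    simp only [List.map_cons, List.flatten_cons]
    exact LoopAt.append (by cases a <;> simpa) ih

end ExpGrowthAux

end AuxLemmas5
section AuxLemmas6

namespace ExpGrowthAux

variable {V E : Type*} {src tgt : E → V} {v w : V}

lemma backward [Fintype E] (hr : Reaches src tgt v w) (h2 : OnTwoCycles src tgt w) :
    ∃ c : ℝ, 1 < c ∧ ∃ N : ℕ, ∀ n ≥ N, c ^ n ≤ (pathCount src tgt v n : ℝ) := by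
  classical
  obtain ⟨C1, C2, hC1, hC2, hCrot, hw1, hw2⟩ := h2
  obtain ⟨R1, hR1, hrot1, hs1⟩ := exists_loop_rep hC1 hw1
  obtain ⟨R2, hR2, hrot2, hs2⟩ := exists_loop_rep hC2 hw2
  have hRrot : ¬ R1.IsRotated R2 := fun h => hCrot (hrot1.trans (h.trans hrot2.symm))
  have hL1 : LoopAt src tgt w R1 := loopAt_of_closed hR1.1 hs1
  have hL2 : LoopAt src tgt w R2 := loopAt_of_closed hR2.1 hs2
  set B1 := R1 ++ R2 with hB1
  set B2 := R2 ++ R1 with hB2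
  have hBne : B1 ≠ B2 := blocks_ne hR1 hR2 hRrot
  set L := R1.length + R2.length with hLdef
  have hB1len : B1.length = L := by rw [hB1, List.length_append]
  have hB2len : B2.length = L := by rw [hB2, List.length_append]; omega
  have hLpos : 0 < L := by
    have := List.length_pos_iff.2 hR1.1.1.1
    omega
  have hB1loop : LoopAt src tgt w B1 := hL1.append hL2
  have hB2loop : LoopAt src tgt w B2 := hL2.append hL1
  obtain ⟨P, hPch, hPhead, hPlast, hPnil⟩ :
      ∃ P : List E, P.Chain' (fun e f => tgt e = src f) ∧ HeadSrc src v P ∧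
        LastTgt tgt w P ∧ (P = [] → v = w) := by
    rcases hr with rfl | ⟨P, ⟨hPne, hPch⟩, hPs, hPe⟩
    · exact ⟨[], List.isChain_nil, by intro e he; simp at he, by intro e he; simp at he,
        fun _ => rfl⟩
    · exact ⟨P, hPch, headSrc_of_startsAt hPs, lastTgt_of_endsAt hPe, fun h => absurd h hPne⟩
  set d := P.length with hd
  refine ⟨(2:ℝ) ^ ((1:ℝ)/(2*(L:ℝ))), ?_, 2*d + 2*L + 1, ?_⟩
  · rw [Real.one_lt_rpow_iff_of_pos (by norm_num)]
    left
    refine ⟨by norm_num, by positivity⟩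
  intro n hn
  set q := (n - d) / L with hqdef
  set r := (n - d) % L with hrdef
  have hdm : q * L + r = n - d := by
    rw [mul_comm]
    exact Nat.div_add_mod _ _
  have hrL : r < L := Nat.mod_lt _ hLpos
  have hdn : d ≤ n := by omega
  haveI hfin : Finite {l : List E // l.length = n ∧ IsDiPath src tgt l ∧ StartsAt src l v} := by
    have h1 : {l : List E | l.length = n}.Finite := List.finite_length_eq E n
    haveI := h1.to_subtype
    exact Finite.of_injective
      (fun x : {l : List E // l.length = n ∧ IsDiPath src tgt l ∧ StartsAt src l v} =>
        (⟨x.1, x.2.1⟩ : {l : List E | l.length = n}))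
      (by
        intro x y hxy
        have h := congrArg Subtype.val hxy
        exact Subtype.ext h)
  set T := B1.take r with hT
  have hTlen : T.length = r := by rw [hT, List.length_take]; omega
  have hTch : T.Chain' (fun e f => tgt e = src f) := hB1loop.1.take r
  have hThead : HeadSrc src w T := by
    intro e he
    rcases Nat.eq_zero_or_pos r with h0 | hpos
    · rw [hT, h0] at he; simp at he
    · rw [hT, head?_take' hpos] at he
      exact hB1loop.2.1 e he
  have hmain : ∀ s : List.Vector Bool q,
      (P ++ ((s.toList.map fun b => if b then B1 else B2).flatten ++ T)).length = n ∧
      IsDiPath src tgt (P ++ ((s.toList.map fun b => if b then B1 else B2).flatten ++ T)) ∧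
      StartsAt src (P ++ ((s.toList.map fun b => if b then B1 else B2).flatten ++ T)) v := by
    intro s
    set X := (s.toList.map fun b => if b then B1 else B2).flatten with hX
    have hXloop : LoopAt src tgt w X := join_blocks_loopAt hB1loop hB2loop _
    have hXlen : X.length = q * L := by
      rw [hX, join_blocks_length hB1len hB2len, List.Vector.toList_length]
    have hXTch : (X ++ T).Chain' (fun e f => tgt e = src f) :=
      List.isChain_append.2 ⟨hXloop.1, hTch,
        fun x hx y hy => by rw [hXloop.2.2 x hx, hThead y hy]⟩
    have hXThead : HeadSrc src w (X ++ T) := hXloop.2.1.append hThead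
    have hlenall : (P ++ (X ++ T)).length = n := by
      rw [List.length_append, List.length_append, hXlen, hTlen]
      omega
    have hch : (P ++ (X ++ T)).Chain' (fun e f => tgt e = src f) :=
      List.isChain_append.2 ⟨hPch, hXTch,
        fun x hx y hy => by rw [hPlast x hx, hXThead y hy]⟩
    have hne : P ++ (X ++ T) ≠ [] := by
      have hpos : 0 < (P ++ (X ++ T)).length := by rw [hlenall]; omega
      intro hc
      rw [hc] at hpos
      simp at hpos
    have hstart : StartsAt src (P ++ (X ++ T)) v := by
      rcases eq_or_ne P [] with hP0 | hP0
      · have hvw := hPnil hP0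
        rw [hP0, List.nil_append]
        have hne' : X ++ T ≠ [] := by
          intro hc
          have := congrArg List.length hc
          rw [List.length_append, hXlen, hTlen, List.length_nil] at this
          omega
        rw [hvw]
        exact startsAt_of_headSrc hXThead hne'
      · rw [StartsAt, List.head?_append, List.head?_eq_head hP0]
        simp only [Option.or, Option.map_some]
        rw [hPhead (P.head hP0) (by rw [List.head?_eq_head hP0]; rfl)]
    exact ⟨hlenall, ⟨hne, hch⟩, hstart⟩
  have hcount : 2 ^ q ≤ pathCount src tgt v n := by
    have hv : Nat.card (List.Vector Bool q) = 2 ^ q := by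
      rw [Nat.card_eq_fintype_card, card_vector]
      simp
    rw [pathCount, ← hv]
    refine Nat.card_le_card_of_injective
      (fun s : List.Vector Bool q =>
        (⟨P ++ ((s.toList.map fun b => if b then B1 else B2).flatten ++ T), hmain s⟩ :
          {l : List E // l.length = n ∧ IsDiPath src tgt l ∧ StartsAt src l v})) ?_
    intro s s' hss
    have h1 := congrArg Subtype.val hss
    simp only at h1
    have h3 := List.append_cancel_right (List.append_cancel_left h1)
    exact List.Vector.toList_injective
      (join_blocks_inj (hB1len.trans hB2len.symm) hBne _ _
        (by rw [List.Vector.toList_length, List.Vector.toList_length]) h3)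
  have hkey : n ≤ 2 * (q * L) := by omega
  have hnr : (n:ℝ) ≤ 2 * ((q:ℝ) * (L:ℝ)) := by exact_mod_cast hkey
  have hLR : (0:ℝ) < (L:ℝ) := by exact_mod_cast hLpos
  calc ((2:ℝ) ^ ((1:ℝ)/(2*(L:ℝ)))) ^ n
      = (2:ℝ) ^ (((1:ℝ)/(2*(L:ℝ))) * n) := by
        rw [← Real.rpow_natCast ((2:ℝ) ^ ((1:ℝ)/(2*(L:ℝ)))) n, ← Real.rpow_mul (by norm_num)]
    _ ≤ (2:ℝ) ^ ((q:ℕ):ℝ) := by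
        refine Real.rpow_le_rpow_of_exponent_le (by norm_num) ?_
        rw [div_mul_eq_mul_div, one_mul, div_le_iff₀ (by positivity)]
        rw [show (q:ℝ) * (2*(L:ℝ)) = 2 * ((q:ℝ) * (L:ℝ)) by ring]
        exact hnr
    _ = ((2^q : ℕ) : ℝ) := by
        rw [Real.rpow_natCast]
        push_cast
        ring
    _ ≤ (pathCount src tgt v n : ℝ) := by exact_mod_cast hcount

end ExpGrowthAux

end AuxLemmas6
section AuxLemmas7

namespace ExpGrowthAux

variable {V E : Type*} {src tgt : E → V} {v : V}

lemma forward [Fintype E]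
    (hexp : ∃ c : ℝ, 1 < c ∧ ∃ N : ℕ, ∀ n ≥ N, c ^ n ≤ (pathCount src tgt v n : ℝ)) :
    ∃ w : V, Reaches src tgt v w ∧ OnTwoCycles src tgt w := by
  by_contra hno
  push_neg at hno
  obtain ⟨c, hc, N, hN⟩ := hexp
  set K := Fintype.card E with hK
  have hub : ∀ n : ℕ, (pathCount src tgt v n : ℝ) ≤ ((n+1 : ℕ) : ℝ) ^ K := by
    intro n
    exact_mod_cast Nat.cast_le.2 (pathCount_le hno n)
  have htend := tendsto_pow_const_div_const_pow_of_one_lt K hc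
  have hev := htend.eventually (eventually_lt_nhds
    (show (0:ℝ) < ((2:ℝ)^K)⁻¹ by positivity))
  obtain ⟨M, hM⟩ := Filter.eventually_atTop.1 hev
  set n := max (max N M) 1 with hn
  have hnN : N ≤ n := le_trans (le_max_left _ _) (le_max_left _ _)
  have hnM : M ≤ n := le_trans (le_max_right _ _) (le_max_left _ _)
  have hn1 : 1 ≤ n := le_max_right _ _
  have h1 : c ^ n ≤ ((n+1:ℕ):ℝ) ^ K := (hN n hnN).trans (hub n)
  have h2 : ((n:ℝ))^K / c^n < ((2:ℝ)^K)⁻¹ := hM n hnM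
  have hcpos : (0:ℝ) < c ^ n := pow_pos (by linarith) n
  have h2pos : (0:ℝ) < (2:ℝ)^K := by positivity
  have h3 : ((n+1:ℕ):ℝ)^K ≤ (2:ℝ)^K * (n:ℝ)^K := by
    rw [← mul_pow]
    refine pow_le_pow_left₀ (by positivity) ?_ K
    push_cast
    have : (1:ℝ) ≤ (n:ℝ) := by exact_mod_cast hn1
    linarith
  have h4 : (n:ℝ)^K < ((2:ℝ)^K)⁻¹ * c^n := by
    rw [div_lt_iff₀ hcpos] at h2
    linarith
  have h5 : (2:ℝ)^K * (n:ℝ)^K < c^n := by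
    have := mul_lt_mul_of_pos_left h4 h2pos
    rw [← mul_assoc, mul_inv_cancel₀ (ne_of_gt h2pos), one_mul] at this
    exact this
  linarith

end ExpGrowthAux

end AuxLemmas7

/-- The number of length-`n` paths starting at `v` grows exponentially
if and only if `v` reaches a vertex `w` lying on two distinct simple cycles. -/
theorem expPathGrowth_iff_reaches_two_cycles [Fintype V] [Fintype E]
    (src tgt : E → V) (v : V) :
    (∃ c : ℝ, 1 < c ∧ ∃ N : ℕ, ∀ n ≥ N, c ^ n ≤ (pathCount src tgt v n : ℝ)) ↔
      (∃ w : V, Reaches src tgt v w ∧ OnTwoCycles src tgt w) := by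
  constructor
  · exact ExpGrowthAux.forward
  · rintro ⟨w, hr, h2⟩
    exact ExpGrowthAux.backward hr h2
end

section
/- Let v be a vertex of a finite directed multigraph G and suppose there exist d ∈ ℕ and constants 0 < c₁ ≤ c₂ with c₁·n^d ≤ |Path_G(v,n)| ≤ c₂·n^d for all sufficiently large n. Then d equals the largest k ∈ ℕ for which there exist pairwise vertex-disjoint simple cycles C₀, C₁, …, C_k with v ≥ C₀ ≥ C₁ ≥ ⋯ ≥ C_k. -/
open Filter Topology

variable {V E : Type*}

namespace PolyGrowth
open List

variable {V E : Type*}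

section WalkDefs
variable (src tgt : E → V)

/-- A walk from `a` to `b` along the list of edges `l`. -/
inductive Walk : V → V → List E → Prop
  | nil (a : V) : Walk a a []
  | cons (e : E) {b : V} {l : List E} : Walk (tgt e) b l → Walk (src e) b (e :: l)

/-- Power of a list. -/
def npow (x : List E) (a : ℕ) : List E := (List.replicate a x).flatten

end WalkDefs

variable {src tgt : E → V}

lemma walk_nil_iff {a b : V} : Walk src tgt a b [] ↔ a = b := by
  constructor
  · rintro h; cases h; rfl
  · rintro rfl; exact Walk.nil a

lemma walk_cons_iff {a b : V} {e : E} {l : List E} :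
    Walk src tgt a b (e :: l) ↔ src e = a ∧ Walk src tgt (tgt e) b l := by
  constructor
  · rintro h; cases h; exact ⟨rfl, by assumption⟩
  · rintro ⟨rfl, h⟩; exact h.cons e

lemma Walk.append {a b c : V} {l l' : List E} (h : Walk src tgt a b l)
    (h' : Walk src tgt b c l') : Walk src tgt a c (l ++ l') := by
  induction h with
  | nil => simpa
  | cons e h ih => exact (ih h').cons e

lemma walk_append_iff {a c : V} {l l' : List E} :
    Walk src tgt a c (l ++ l') ↔ ∃ b, Walk src tgt a b l ∧ Walk src tgt b c l' := by
  constructor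
  · intro h
    induction l generalizing a with
    | nil => exact ⟨a, Walk.nil a, h⟩
    | cons e t ih =>
      rw [cons_append, walk_cons_iff] at h
      obtain ⟨rfl, h⟩ := h
      obtain ⟨b, hb1, hb2⟩ := ih h
      exact ⟨b, hb1.cons e, hb2⟩
  · rintro ⟨b, h, h'⟩; exact h.append h'

lemma Walk.head_src {a b : V} {e : E} {l : List E} (h : Walk src tgt a b (e :: l)) :
    src e = a := (walk_cons_iff.1 h).1

lemma walk_singleton_iff {a b : V} {e : E} :
    Walk src tgt a b [e] ↔ src e = a ∧ tgt e = b := by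
  rw [walk_cons_iff, walk_nil_iff]

lemma Walk.npow {a : V} {x : List E} (h : Walk src tgt a a x) (n : ℕ) :
    Walk src tgt a a (npow x n) := by
  induction n with
  | zero => exact Walk.nil a
  | succ k ih =>
    have : PolyGrowth.npow x (k+1) = x ++ PolyGrowth.npow x k := by
      simp [PolyGrowth.npow, List.replicate_succ]
    rw [this]; exact h.append ih

@[simp] lemma npow_zero (x : List E) : npow x 0 = [] := rfl

lemma npow_succ (x : List E) (n : ℕ) : npow x (n+1) = x ++ npow x n := by
  simp [npow, List.replicate_succ]

@[simp] lemma length_npow (x : List E) (n : ℕ) : (npow x n).length = n * x.length := by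
  induction n with
  | zero => simp
  | succ k ih => rw [npow_succ]; simp [ih]; ring

lemma map_npow {β : Type*} (f : E → β) (x : List E) (n : ℕ) :
    (npow x n).map f = npow (x.map f) n := by
  induction n with
  | zero => simp
  | succ k ih => rw [npow_succ, npow_succ, map_append, ih]

lemma count_npow [DecidableEq E] (c : E) (x : List E) (n : ℕ) :
    (npow x n).count c = n * x.count c := by
  induction n with
  | zero => simp [npow]
  | succ k ih => rw [npow_succ, count_append, ih]; ring

lemma subset_npow {x : List E} {n : ℕ} (hn : n ≠ 0) : x ⊆ npow x n := by
  cases n with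
  | zero => simp at hn
  | succ k => rw [npow_succ]; exact subset_append_left _ _

lemma npow_subset (x : List E) (n : ℕ) : npow x n ⊆ x := by
  induction n with
  | zero => simp [npow]
  | succ k ih => rw [npow_succ]; exact append_subset.2 ⟨Subset.refl x, ih⟩

end PolyGrowth

namespace PolyGrowth
open List

variable {V E : Type*} {src tgt : E → V}

lemma walk_iff_chain {l : List E} (hl : l ≠ []) {a b : V} :
    Walk src tgt a b l ↔ (l.Chain' (fun e f => tgt e = src f) ∧
      l.head?.map src = some a ∧ l.getLast?.map tgt = some b) := by
  induction l generalizing a with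
  | nil => simp at hl
  | cons e t ih =>
    cases t with
    | nil =>
      simp only [walk_singleton_iff, List.Chain', List.isChain_singleton, List.head?_cons,
        List.getLast?_singleton, Option.map_some, Option.some.injEq, true_and]
    | cons f t' =>
      rw [walk_cons_iff, ih (by simp)]
      simp only [List.Chain', List.isChain_cons_cons, List.head?_cons, Option.map_some, Option.some.injEq,
        List.getLast?_cons_cons]
      constructor
      · rintro ⟨rfl, h1, h2, h3⟩; exact ⟨⟨h2.symm, h1⟩, rfl, h3⟩
      · rintro ⟨⟨h1, h2⟩, rfl, h3⟩; exact ⟨rfl, h2, h1.symm, h3⟩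

lemma pathTriple_iff {l : List E} {a b : V} :
    (IsDiPath src tgt l ∧ StartsAt src l a ∧ EndsAt tgt l b) ↔
      (l ≠ [] ∧ Walk src tgt a b l) := by
  constructor
  · rintro ⟨⟨hne, hch⟩, hs, he⟩
    exact ⟨hne, (walk_iff_chain hne).2 ⟨hch, hs, he⟩⟩
  · rintro ⟨hne, hw⟩
    obtain ⟨h1, h2, h3⟩ := (walk_iff_chain hne).1 hw
    exact ⟨⟨hne, h1⟩, h2, h3⟩

lemma reaches_iff {a b : V} :
    Reaches src tgt a b ↔ ∃ l, Walk src tgt a b l := by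
  constructor
  · rintro (rfl | ⟨l, hp, hs, he⟩)
    · exact ⟨[], Walk.nil a⟩
    · exact ⟨l, (pathTriple_iff.1 ⟨hp, hs, he⟩).2⟩
  · rintro ⟨l, hw⟩
    cases l with
    | nil => exact Or.inl (walk_nil_iff.1 hw)
    | cons e t =>
      right
      obtain ⟨h1, h2, h3⟩ := pathTriple_iff.2 ⟨by simp, hw⟩
      exact ⟨e :: t, h1, h2, h3⟩

lemma reaches_trans {a b c : V} (h1 : Reaches src tgt a b) (h2 : Reaches src tgt b c) :
    Reaches src tgt a c := by
  rw [reaches_iff] at h1 h2 ⊢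
  obtain ⟨l1, hl1⟩ := h1
  obtain ⟨l2, hl2⟩ := h2
  exact ⟨l1 ++ l2, hl1.append hl2⟩

/-- A simple cycle based at `u`. -/
def Cyc (src tgt : E → V) (u : V) (x : List E) : Prop :=
  x ≠ [] ∧ Walk src tgt u u x ∧ (x.map src).Nodup

lemma isSimpleCycle_iff {l : List E} :
    IsSimpleCycle src tgt l ↔ ∃ u, Cyc src tgt u l := by
  constructor
  · rintro ⟨⟨hp, u, hs, he⟩, hnd⟩
    obtain ⟨hne, hw⟩ := pathTriple_iff.1 ⟨hp, hs, he⟩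
    exact ⟨u, hne, hw, hnd⟩
  · rintro ⟨u, hne, hw, hnd⟩
    obtain ⟨h1, h2, h3⟩ := pathTriple_iff.2 ⟨hne, hw⟩
    exact ⟨⟨h1, u, h2, h3⟩, hnd⟩

lemma Cyc.head_mem_srcs {u : V} {x : List E} (h : Cyc src tgt u x) : u ∈ x.map src := by
  obtain ⟨hne, hw, -⟩ := h
  cases x with
  | nil => simp at hne
  | cons e t => simp [hw.head_src]

lemma mem_srcs_split {a b u : V} {l : List E} (h : Walk src tgt a b l)
    (hu : u ∈ l.map src) :
    ∃ p e s, l = p ++ e :: s ∧ src e = u ∧ Walk src tgt a u p ∧ Walk src tgt u b (e :: s) := by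
  obtain ⟨e, he, rfl⟩ := List.exists_of_mem_map hu
  obtain ⟨p, s, rfl⟩ := List.append_of_mem he
  obtain ⟨c, hc1, hc2⟩ := walk_append_iff.1 h
  have := hc2.head_src
  subst this
  exact ⟨p, e, s, rfl, rfl, hc1, hc2⟩

lemma mem_split_last {α : Type*} {a : α} {L : List α} (h : a ∈ L) :
    ∃ s t, L = s ++ a :: t ∧ a ∉ t := by
  induction L with
  | nil => simp at h
  | cons x T ih =>
    by_cases hT : a ∈ T
    · obtain ⟨s, t, rfl, hat⟩ := ih hT
      exact ⟨x :: s, t, rfl, hat⟩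
    · have : a = x := by rcases List.mem_cons.1 h with h | h; exact h; exact absurd h hT
      subst this
      exact ⟨[], T, rfl, hT⟩

lemma walk_split_last {a b u : V} {l : List E} (h : Walk src tgt a b l)
    (hu : u ∈ l.map src) :
    ∃ p e s, l = p ++ e :: s ∧ src e = u ∧ Walk src tgt a u p ∧
      Walk src tgt (tgt e) b s ∧ u ∉ s.map src := by
  obtain ⟨S, T, hST, hnT⟩ := mem_split_last hu
  obtain ⟨l₁, l₂, rfl, hm1, hm2⟩ := List.map_eq_append_iff.1 hST
  obtain ⟨e, l₃, rfl, he, hm3⟩ := List.map_eq_cons_iff.1 hm2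
  obtain ⟨c, hc1, hc2⟩ := walk_append_iff.1 h
  rw [walk_cons_iff] at hc2
  obtain ⟨h1, h2⟩ := hc2
  rw [he] at h1; subst h1
  exact ⟨l₁, e, l₃, rfl, he, hc1, h2, by rw [hm3]; exact hnT⟩

lemma not_nodup_split {α : Type*} {L : List α} (h : ¬ L.Nodup) :
    ∃ (a : α) (s t r : List α), L = s ++ a :: t ++ a :: r := by
  induction L with
  | nil => simp at h
  | cons x T ih =>
    rw [List.nodup_cons] at h
    push_neg at h
    by_cases hx : x ∈ T
    · obtain ⟨t, r, rfl⟩ := List.append_of_mem hx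
      exact ⟨x, [], t, r, rfl⟩
    · obtain ⟨a, s, t, r, rfl⟩ := ih (h hx)
      exact ⟨a, x :: s, t, r, rfl⟩

lemma walk_dup_split {a b : V} {l : List E} (h : Walk src tgt a b l)
    (hnd : ¬ (l.map src).Nodup) :
    ∃ (u : V) (p m s : List E), l = p ++ m ++ s ∧ m ≠ [] ∧ s ≠ [] ∧
      Walk src tgt a u p ∧ Walk src tgt u u m ∧ Walk src tgt u b s := by
  obtain ⟨c, S, T, R, hL⟩ := not_nodup_split hnd
  have hL' : List.map src l = (S ++ c :: T) ++ c :: R := by rw [hL]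
  clear hL; rename' hL' => hL
  obtain ⟨l₁, l₂, rfl, hm1, hm2⟩ := List.map_eq_append_iff.1 hL
  obtain ⟨e₂, l₃, rfl, he₂, hm3⟩ := List.map_eq_cons_iff.1 hm2
  obtain ⟨l₁a, l₁b, rfl, hm1a, hm1b⟩ := List.map_eq_append_iff.1 hm1
  obtain ⟨e₁, l₄, rfl, he₁, hm4⟩ := List.map_eq_cons_iff.1 hm1b
  obtain ⟨c₁, hc1, hc2⟩ := walk_append_iff.1 h
  obtain ⟨c₂, hd1, hd2⟩ := walk_append_iff.1 hc1
  have h1 := hd2.head_src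
  have h2 := hc2.head_src
  rw [he₁] at h1; rw [he₂] at h2
  subst h1; subst h2
  refine ⟨c, l₁a, e₁ :: l₄, e₂ :: l₃, by simp, by simp, by simp, hd1, ?_, hc2⟩
  exact hd2

lemma Cyc.rotate {u u' : V} {x : List E} (h : Cyc src tgt u x) (hu' : u' ∈ x.map src) :
    ∃ y, Cyc src tgt u' y ∧ y ~ x := by
  obtain ⟨hne, hw, hnd⟩ := h
  obtain ⟨p, e, s, rfl, he, hw1, hw2⟩ := mem_srcs_split hw hu'
  refine ⟨(e :: s) ++ p, ⟨by simp, hw2.append hw1, ?_⟩, List.perm_append_comm⟩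
  have hperm : (p ++ e :: s).map src ~ ((e :: s) ++ p).map src :=
    (List.perm_append_comm).map src
  exact hperm.nodup hnd

lemma long_srcs_not_nodup [Fintype V] {l : List E}
    (hlen : Fintype.card V < l.length) : ¬ (l.map src).Nodup := fun hnd => by
  have := hnd.length_le_card
  rw [List.length_map] at this
  omega

end PolyGrowth

namespace PolyGrowth
open List

variable {V E : Type*} {src tgt : E → V}

/-- Reachable from the base vertex. -/
def RV (src tgt : E → V) (v₀ u : V) : Prop := ∃ l, Walk src tgt v₀ u l

lemma RV.refl (v₀ : V) : RV src tgt v₀ v₀ := ⟨[], Walk.nil v₀⟩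

lemma RV.extend {v₀ u w : V} (h : RV src tgt v₀ u) {l : List E}
    (hw : Walk src tgt u w l) : RV src tgt v₀ w := by
  obtain ⟨q, hq⟩ := h; exact ⟨q ++ l, hq.append hw⟩

/-- Unique cycles through every reachable vertex. -/
def UC (src tgt : E → V) (v₀ : V) : Prop :=
  ∀ u x y, RV src tgt v₀ u → Cyc src tgt u x → Cyc src tgt u y → x = y

-- The canonical simple cycle based at `u` (junk if none exists).
open Classical in
noncomputable def cycAt (src tgt : E → V) (u : V) : List E :=
  if h : ∃ x, Cyc src tgt u x then h.choose else []

lemma cycAt_spec {u : V} (h : ∃ x, Cyc src tgt u x) : Cyc src tgt u (cycAt src tgt u) := by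
  unfold cycAt
  rw [dif_pos h]
  exact h.choose_spec

lemma cyc_eq_cycAt {v₀ u : V} (hUC : UC src tgt v₀) (hr : RV src tgt v₀ u)
    {x : List E} (hx : Cyc src tgt u x) : x = cycAt src tgt u :=
  hUC u x _ hr hx (cycAt_spec ⟨x, hx⟩)

lemma npow_ne_nil_elim {x : List E} {b : ℕ} (h : npow x b ≠ []) : b ≠ 0 ∧ x ≠ [] := by
  constructor
  · rintro rfl; simp at h
  · rintro rfl; simp [npow] at h

lemma mem_srcs_of_mem_srcs_npow {x : List E} {b : ℕ} {u : V}
    (h : u ∈ (npow x b).map src) : u ∈ x.map src := by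
  rw [map_npow] at h; exact npow_subset _ _ h

lemma srcs_npow_subset_srcs {x : List E} {b : ℕ} (hb : b ≠ 0) :
    x.map src ⊆ (npow x b).map src := by
  rw [map_npow]; exact subset_npow hb

lemma mem_split_first {α : Type*} {a : α} {L : List α} (h : a ∈ L) :
    ∃ s t, L = s ++ a :: t ∧ a ∉ s := by
  induction L with
  | nil => simp at h
  | cons x T ih =>
    by_cases hx : a = x
    · subst hx; exact ⟨[], T, rfl, by simp⟩
    · obtain ⟨s, t, rfl, has⟩ := ih (by rcases List.mem_cons.1 h with h | h; exact absurd h hx; exact h)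
      exact ⟨x :: s, t, rfl, by simp [has, Ne.symm, hx]⟩

lemma walk_split_first {a b u : V} {l : List E} (h : Walk src tgt a b l)
    (hu : u ∈ l.map src) :
    ∃ p e s, l = p ++ e :: s ∧ src e = u ∧ Walk src tgt a u p ∧
      Walk src tgt u b (e :: s) ∧ u ∉ p.map src := by
  obtain ⟨S, T, hST, hnS⟩ := mem_split_first hu
  obtain ⟨l₁, l₂, rfl, hm1, hm2⟩ := List.map_eq_append_iff.1 hST
  obtain ⟨e, l₃, rfl, he, hm3⟩ := List.map_eq_cons_iff.1 hm2
  obtain ⟨c, hc1, hc2⟩ := walk_append_iff.1 h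
  have h1 := hc2.head_src
  rw [he] at h1; subst h1
  exact ⟨l₁, e, l₃, rfl, he, hc1, hc2, by rw [hm1]; exact hnS⟩

/-- Key auxiliary step: a closed walk which returns to its basepoint only at the end,
is a simple cycle — provided shorter closed walks are powers of canonical cycles. -/
lemma minimal_closed_is_cyc {v₀ : V} (hUC : UC src tgt v₀) {n : ℕ}
    (IH : ∀ (l : List E) (u : V), l.length ≤ n → RV src tgt v₀ u → Walk src tgt u u l →
      ∃ a, l = npow (cycAt src tgt u) a ∧ (l ≠ [] → Cyc src tgt u (cycAt src tgt u)))
    {u : V} {e : E} {p : List E} (hw : Walk src tgt u u (e :: p))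
    (hnp : u ∉ p.map src) (hlen : (e :: p).length ≤ n + 1) (hr : RV src tgt v₀ u) :
    Cyc src tgt u (e :: p) := by
  refine ⟨by simp, hw, ?_⟩
  by_contra hnd
  obtain ⟨u'', α, m, β, heq, hm, hβ, hwα, hwm, hwβ⟩ := walk_dup_split hw hnd
  have hheadβ : u'' ∈ β.map src := by
    cases β with
    | nil => simp at hβ
    | cons f t => simp [hwβ.head_src]
  cases α with
  | nil =>
    have huu : u'' = u := (walk_nil_iff.1 hwα).symm
    subst huu
    -- m is a nonempty prefix: e :: p = m ++ β, so β ⊆ p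
    have hβp : β.map src ⊆ (e :: p).map src := by
      intro z hz; rw [heq]; simp only [nil_append, map_append, mem_append]; exact Or.inr hz
    cases m with
    | nil => simp at hm
    | cons e₀ m' =>
      have hthis : e :: p = e₀ :: (m' ++ β) := by simpa using heq
      obtain ⟨h1, h2⟩ := List.cons_eq_cons.1 hthis
      have hβp' : β.map src ⊆ p.map src := by
        intro z hz; rw [h2]; simp only [map_append, mem_append]; exact Or.inr hz
      exact hnp (hβp' hheadβ)
  | cons e₀ α' =>
    have heq' : e :: p = e₀ :: (α' ++ m ++ β) := by simpa using heq
    have he₀ : e₀ = e := (List.cons_eq_cons.1 heq').1.symm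
    have hp : p = α' ++ m ++ β := by
      have := (List.cons_eq_cons.1 heq').2
      rw [this, List.append_assoc]
    have hmsub : m.map src ⊆ p.map src := by
      intro z hz; rw [hp]; simp only [map_append, mem_append]; exact Or.inl (Or.inr hz)
    have hne : u'' ≠ u := by
      rintro rfl
      apply hnp; apply hmsub
      cases m with
      | nil => simp at hm
      | cons f t => simp [hwm.head_src]
    have hru'' : RV src tgt v₀ u'' := hr.extend hwα
    -- m is a power of the cycle at u''
    have hmlen : m.length ≤ n := by
      have := congrArg List.length heq'
      simp only [length_cons, length_append] at this
      have hβ1 : 1 ≤ β.length := by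
        cases β with | nil => simp at hβ | cons f t => simp
      simp only [length_cons] at hlen
      omega
    obtain ⟨b, hmb, hcycm⟩ := IH m u'' hmlen hru'' hwm
    have hcycu'' := hcycm hm
    have hb : b ≠ 0 := (npow_ne_nil_elim (hmb ▸ hm)).1
    -- α ++ β is a power of the cycle at u
    have hαβ : Walk src tgt u u ((e₀ :: α') ++ β) := hwα.append hwβ
    have hαβlen : ((e₀ :: α') ++ β).length ≤ n := by
      have := congrArg List.length heq'
      simp only [length_cons, length_append, length_append] at this ⊢
      have hm1 : 1 ≤ m.length := by
        cases m with | nil => simp at hm | cons f t => simp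
      simp only [length_cons] at hlen
      omega
    obtain ⟨c, hcb, hcycc⟩ := IH _ u hαβlen hr hαβ
    have hcycu := hcycc (by simp)
    -- u'' lies on the cycle at u
    have hu''cyc : u'' ∈ (cycAt src tgt u).map src := by
      apply mem_srcs_of_mem_srcs_npow (b := c)
      rw [← hcb]
      simp only [map_append, mem_append]
      exact Or.inr hheadβ
    obtain ⟨y, hycyc, hyperm⟩ := hcycu.rotate hu''cyc
    have hy : y = cycAt src tgt u'' := cyc_eq_cycAt hUC hru'' hycyc
    have humem : u ∈ (cycAt src tgt u'').map src := by
      rw [← hy]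
      exact (hyperm.map src).mem_iff.2 hcycu.head_mem_srcs
    -- but then u lies on m, hence in p : contradiction
    apply hnp
    apply hmsub
    rw [hmb]
    exact srcs_npow_subset_srcs hb humem

/-- Every closed walk at a reachable vertex is a power of the canonical simple cycle. -/
lemma closed_walk_npow {v₀ : V} (hUC : UC src tgt v₀) :
    ∀ (n : ℕ) (l : List E) (u : V), l.length ≤ n → RV src tgt v₀ u → Walk src tgt u u l →
      ∃ a, l = npow (cycAt src tgt u) a ∧ (l ≠ [] → Cyc src tgt u (cycAt src tgt u)) := by
  intro n
  induction n with
  | zero =>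
    intro l u hl _ _
    have : l = [] := List.eq_nil_of_length_eq_zero (Nat.le_zero.1 hl)
    subst this
    exact ⟨0, rfl, by simp⟩
  | succ n ihn =>
    intro l u hl hr hw
    cases l with
    | nil => exact ⟨0, rfl, by simp⟩
    | cons e t =>
      by_cases hut : u ∈ t.map src
      · -- split t at the first occurrence of u
        obtain ⟨p, e', s', rfl, he', hw1, hw2, hnp⟩ :=
          walk_split_first ((walk_cons_iff.1 hw).2) hut
        have hq : Walk src tgt u u (e :: p) := by
          rw [walk_cons_iff]; exact ⟨(walk_cons_iff.1 hw).1, hw1⟩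
        have hqlen : (e :: p).length ≤ n + 1 := by
          simp only [length_cons, length_append] at hl ⊢; omega
        have hcyc : Cyc src tgt u (e :: p) := minimal_closed_is_cyc hUC ihn hq hnp hqlen hr
        have hqe : e :: p = cycAt src tgt u := cyc_eq_cycAt hUC hr hcyc
        obtain ⟨a, ha, -⟩ := ihn (e' :: s') u
          (by simp only [length_cons, length_append] at hl ⊢; omega) hr hw2
        refine ⟨a + 1, ?_, fun _ => hqe ▸ cycAt_spec ⟨_, hcyc⟩⟩
        rw [npow_succ, ← ha, ← hqe]
        simp
      · have hcyc : Cyc src tgt u (e :: t) :=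
          minimal_closed_is_cyc hUC ihn hw hut hl hr
        have : e :: t = cycAt src tgt u := cyc_eq_cycAt hUC hr hcyc
        exact ⟨1, by simp [npow, this], fun _ => this ▸ cycAt_spec ⟨_, hcyc⟩⟩

end PolyGrowth

namespace PolyGrowth
open List

variable {V E : Type*} {src tgt : E → V}

lemma pathSet_finite [Finite E] (v : V) (n : ℕ) :
    Finite {l : List E // l.length = n ∧ ∃ w, Walk src tgt v w l} := by
  have h : {l : List E | l.length = n ∧ ∃ w, Walk src tgt v w l}.Finite :=
    (List.finite_length_eq E n).subset (fun l hl => hl.1)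
  exact h.to_subtype

lemma pathCount_eq [Finite E] (v : V) {n : ℕ} (hn : n ≠ 0) :
    pathCount src tgt v n =
      Nat.card {l : List E // l.length = n ∧ ∃ w, Walk src tgt v w l} := by
  apply Nat.card_congr
  apply Equiv.subtypeEquivRight
  intro l
  constructor
  · rintro ⟨hlen, hp, hs⟩
    refine ⟨hlen, tgt (l.getLast hp.1), ?_⟩
    exact (pathTriple_iff.1 ⟨hp, hs, by rw [EndsAt, List.getLast?_eq_getLast hp.1]; rfl⟩).2
  · rintro ⟨hlen, w, hw⟩
    have hne : l ≠ [] := by rintro rfl; exact hn hlen.symm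
    obtain ⟨h1, h2, h3⟩ := pathTriple_iff.2 ⟨hne, hw⟩
    exact ⟨hlen, h1, h2⟩

lemma le_pathCount [Finite E] {v : V} {n : ℕ} (hn : n ≠ 0) {ι : Type*} [Finite ι]
    (f : ι → List E) (hf : ∀ i, (f i).length = n ∧ ∃ w, Walk src tgt v w (f i))
    (hinj : Function.Injective f) : Nat.card ι ≤ pathCount src tgt v n := by
  rw [pathCount_eq v hn]
  have := pathSet_finite (src := src) (tgt := tgt) (E := E) v n
  exact Nat.card_le_card_of_injective
    (fun i => (⟨f i, hf i⟩ : {l : List E // l.length = n ∧ ∃ w, Walk src tgt v w l}))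
    (fun i j hij => hinj (congrArg Subtype.val hij))

lemma pathCount_le [Finite E] {v : V} {n : ℕ} (hn : n ≠ 0) {β : Type*} [Finite β]
    (f : {l : List E // l.length = n ∧ ∃ w, Walk src tgt v w l} → β)
    (hinj : Function.Injective f) : pathCount src tgt v n ≤ Nat.card β := by
  rw [pathCount_eq v hn]
  exact Nat.card_le_card_of_injective f hinj

end PolyGrowth

namespace PolyGrowth
open List

variable {V E : Type*} {src tgt : E → V}

lemma walk_end_unique {a b b' : V} {l : List E} (h : Walk src tgt a b l)
    (h' : Walk src tgt a b' l) : b = b' := by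
  induction l generalizing a with
  | nil =>
    rw [walk_nil_iff] at h h'
    rw [← h, ← h']
  | cons e t ih =>
    rw [walk_cons_iff] at h h'
    exact ih h.2 h'.2

lemma Cyc.eq_of_prefix {u : V} {x y : List E} (hx : Cyc src tgt u x) (hy : Cyc src tgt u y)
    (hp : x <+: y) : x = y := by
  obtain ⟨z, rfl⟩ := hp
  obtain ⟨b, hb1, hb2⟩ := walk_append_iff.1 hy.2.1
  have hbu : b = u := walk_end_unique hb1 hx.2.1
  rw [hbu] at hb2
  cases z with
  | nil => simp
  | cons f t =>
    exfalso
    have h1 : u ∈ (f :: t).map src := by simp [hb2.head_src]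
    have h2 : u ∈ x.map src := hx.head_mem_srcs
    have := hy.2.2
    rw [List.map_append, List.nodup_append] at this
    exact this.2.2 _ h2 _ h1 rfl

/-- The `npow` powers of two distinct cycles at a common vertex are distinct. -/
lemma npow_ne_npow {u : V} {x y : List E} (hx : Cyc src tgt u x) (hy : Cyc src tgt u y)
    (hne : x ≠ y) : npow x y.length ≠ npow y x.length := by
  intro heq
  have hx1 : x ≠ [] := hx.1
  have hy1 : y ≠ [] := hy.1
  have hxp : x <+: npow x y.length := by
    have : y.length ≠ 0 := by simpa using hy1
    obtain ⟨k, hk⟩ := Nat.exists_eq_succ_of_ne_zero this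
    rw [hk, npow_succ]; exact List.prefix_append x _
  have hyp : y <+: npow y x.length := by
    have : x.length ≠ 0 := by simpa using hx1
    obtain ⟨k, hk⟩ := Nat.exists_eq_succ_of_ne_zero this
    rw [hk, npow_succ]; exact List.prefix_append y _
  rw [heq] at hxp
  rcases List.prefix_or_prefix_of_prefix hxp hyp with h | h
  · exact hne (hx.eq_of_prefix hy h)
  · exact hne (hy.eq_of_prefix hx h).symm

/-- Concatenate a sequence of binary choices of loops. -/
def boolBlocks (X Y : List E) : List Bool → List E
  | [] => []
  | (t :: bs) => (if t then X else Y) ++ boolBlocks X Y bs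

lemma boolBlocks_walk {u : V} {X Y : List E} (hX : Walk src tgt u u X)
    (hY : Walk src tgt u u Y) : ∀ bs, Walk src tgt u u (boolBlocks X Y bs) := by
  intro bs
  induction bs with
  | nil => exact Walk.nil u
  | cons t bs ih =>
    rw [boolBlocks]
    cases t
    · simpa using hY.append ih
    · simpa using hX.append ih

lemma boolBlocks_length {X Y : List E} {M : ℕ} (hX : X.length = M) (hY : Y.length = M) :
    ∀ bs, (boolBlocks X Y bs).length = bs.length * M := by
  intro bs
  induction bs with
  | nil => simp [boolBlocks]
  | cons t bs ih =>
    rw [boolBlocks]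
    cases t <;> simp [hX, hY, ih] <;> ring

lemma boolBlocks_inj {X Y : List E} {M : ℕ} (hX : X.length = M) (hY : Y.length = M)
    (hne : X ≠ Y) : ∀ bs bs', bs.length = bs'.length →
      boolBlocks X Y bs = boolBlocks X Y bs' → bs = bs' := by
  intro bs
  induction bs with
  | nil => intro bs' h _; exact (List.length_eq_zero_iff.1 h.symm).symm ▸ rfl
  | cons t bs ih =>
    intro bs' hlen heq
    cases bs' with
    | nil => simp at hlen
    | cons t' bs'' =>
      rw [boolBlocks, boolBlocks] at heq
      have hlb : (if t then X else Y).length = (if t' then X else Y).length := by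
        cases t <;> cases t' <;> simp [hX, hY]
      obtain ⟨h1, h2⟩ := List.append_inj heq hlb
      have htt : t = t' := by
        cases t <;> cases t' <;> first | rfl | (exfalso; simp at h1; first | exact hne h1.symm | exact hne h1)
      subst htt
      simp only [length_cons, Nat.add_right_cancel_iff] at hlen
      rw [ih bs'' hlen h2]

/-- Two distinct equal-length closed walks at a reachable vertex give exponentially
many paths. -/
lemma exp_lower [Finite E] {v u : V} {Q X Y : List E} {M : ℕ}
    (hQ : Walk src tgt v u Q) (hX : Walk src tgt u u X) (hY : Walk src tgt u u Y)
    (hne : X ≠ Y) (hXl : X.length = M) (hYl : Y.length = M) (hM : M ≠ 0) :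
    ∀ m : ℕ, m ≠ 0 → 2 ^ m ≤ pathCount src tgt v (Q.length + m * M) := by
  intro m hm
  have hcard : Nat.card (Fin m → Bool) = 2 ^ m := by
    simp [Nat.card_eq_fintype_card]
  rw [← hcard]
  apply le_pathCount (by positivity)
    (f := fun b : Fin m → Bool => Q ++ boolBlocks X Y (List.ofFn b))
  · intro b
    constructor
    · rw [List.length_append, boolBlocks_length hXl hYl, List.length_ofFn]
    · exact ⟨u, hQ.append (boolBlocks_walk hX hY _)⟩
  · intro b b' h
    have h2 := List.append_cancel_left h
    exact List.ofFn_injective (boolBlocks_inj hXl hYl hne _ _ (by simp) h2)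

/-- Exponential growth contradicts a polynomial upper bound. -/
lemma no_exp_growth {c₂ : ℝ} (hc₂ : 0 < c₂) {d : ℕ} {N : ℕ} {f : ℕ → ℕ}
    (hub : ∀ n ≥ N, (f n : ℝ) ≤ c₂ * (n : ℝ) ^ d) {s M : ℕ} (hM : 1 ≤ M)
    (hlb : ∀ m : ℕ, m ≠ 0 → 2 ^ m ≤ f (s + m * M)) : False := by
  set C : ℝ := c₂ * ((s : ℝ) + M) ^ d with hC
  have hCpos : 0 < C := by positivity
  have hlittle : (fun n : ℕ => (n : ℝ) ^ d) =o[Filter.atTop] fun n => (2 : ℝ) ^ n :=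
    isLittleO_pow_const_const_pow_of_one_lt d (by norm_num)
  have heps : (0 : ℝ) < 1 / (C + 1) := by positivity
  obtain ⟨m₀, hm₀⟩ := Filter.eventually_atTop.1 (hlittle.def heps)
  set m := max (max m₀ (N + 1)) 1 with hmdef
  have hm1 : 1 ≤ m := le_max_right _ _
  have hmm₀ : m₀ ≤ m := le_trans (le_max_left _ _) (le_max_left _ _)
  have hmN : N + 1 ≤ m := le_trans (le_max_right _ _) (le_max_left _ _)
  have hn : N ≤ s + m * M := by nlinarith
  have h1 : (2 : ℝ) ^ m ≤ (f (s + m * M) : ℝ) := by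
    have := hlb m (by omega)
    calc (2 : ℝ) ^ m = ((2 ^ m : ℕ) : ℝ) := by push_cast; ring
    _ ≤ (f (s + m * M) : ℝ) := by exact_mod_cast this
  have h2 : (f (s + m * M) : ℝ) ≤ c₂ * ((s : ℝ) + m * M) ^ d := by
    have := hub (s + m * M) hn
    push_cast at this ⊢
    convert this using 3 <;> push_cast <;> ring
  have h3 : ((s : ℝ) + m * M) ≤ ((s : ℝ) + M) * m := by
    have : (1 : ℝ) ≤ m := by exact_mod_cast hm1
    have hs : (0 : ℝ) ≤ s := Nat.cast_nonneg s
    have hM' : (1 : ℝ) ≤ M := by exact_mod_cast hM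
    nlinarith
  have h4 : c₂ * ((s : ℝ) + m * M) ^ d ≤ C * (m : ℝ) ^ d := by
    rw [hC, mul_assoc]
    apply mul_le_mul_of_nonneg_left _ (le_of_lt hc₂)
    calc ((s : ℝ) + m * M) ^ d ≤ (((s : ℝ) + M) * m) ^ d := by
          apply pow_le_pow_left₀ (by positivity) h3
    _ = ((s : ℝ) + M) ^ d * (m : ℝ) ^ d := by rw [mul_pow]
  have h5 : ((m : ℝ)) ^ d ≤ (1 / (C + 1)) * (2 : ℝ) ^ m := by
    have := hm₀ m hmm₀
    rwa [Real.norm_of_nonneg (by positivity), Real.norm_of_nonneg (by positivity)] at this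
  have h6 : C * (m : ℝ) ^ d ≤ C * ((1 / (C + 1)) * 2 ^ m) :=
    mul_le_mul_of_nonneg_left h5 (le_of_lt hCpos)
  have h7 : C * ((1 / (C + 1)) * 2 ^ m) < 2 ^ m := by
    have h2m : (0 : ℝ) < 2 ^ m := by positivity
    rw [← mul_assoc]
    have : C * (1 / (C + 1)) < 1 := by
      rw [mul_one_div, div_lt_one (by positivity)]
      linarith
    nlinarith
  linarith

/-- The polynomial growth upper bound forces unique cycles at reachable vertices. -/
lemma uc_of_growth [Fintype V] [Finite E] {v : V} {c₂ : ℝ} (hc₂ : 0 < c₂) {d N : ℕ}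
    (hub : ∀ n ≥ N, (pathCount src tgt v n : ℝ) ≤ c₂ * (n : ℝ) ^ d) :
    UC src tgt v := by
  intro u x y hr hx hy
  by_contra hne
  obtain ⟨Q, hQ⟩ := hr
  have hx1 : x.length ≠ 0 := by simpa using hx.1
  have hy1 : y.length ≠ 0 := by simpa using hy.1
  apply no_exp_growth hc₂ hub (s := Q.length) (M := x.length * y.length)
    (Nat.one_le_iff_ne_zero.2 (by positivity))
  intro m hm
  apply exp_lower hQ (hx.2.1.npow y.length) (hy.2.1.npow x.length)
    (npow_ne_npow hx hy hne) (by simp [mul_comm]) (by simp) (by positivity) m hm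

end PolyGrowth

namespace PolyGrowth
open List

variable {V E : Type*} {src tgt : E → V}

/-- From a chain of pairwise-disjoint simple cycles one can build families of walks
with prescribed loop counts. -/
lemma chain_paths [DecidableEq V] {k : ℕ} :
    ∀ (v' : V) (C : Fin (k + 1) → List E),
    (∀ i, ∃ u, Cyc src tgt u (C i)) →
    ReachesCycle src tgt v' (C 0) →
    (∀ i : Fin k, CycleReachesCycle src tgt (C i.castSucc) (C i.succ)) →
    ∀ (P : ℕ), (∀ i, (C i).length ∣ P) → P ≠ 0 →
    ∃ (s : ℕ) (wit : Fin (k + 1) → V) (Qc : Fin (k + 1) → ℕ) (Kf : V → ℕ)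
      (Rl : Fin (k + 1) → List E) (F : (Fin (k + 1) → ℕ) → List E),
      (∀ i, 1 ≤ Qc i) ∧ (∀ i, wit i ∈ (Rl i).map src) ∧
      (∀ i, ((Rl i).map src).Nodup) ∧ (∀ i, (Rl i).map src ~ (C i).map src) ∧
      ∀ c, (∃ w, Walk src tgt v' w (F c)) ∧
        (F c).length = s + P * (∑ i, c i) ∧
        ∀ z : V, ((F c).map src).count z =
          Kf z + ∑ i, c i * Qc i * (((Rl i).map src).count z) := by
  induction k with
  | zero =>
    intro v' C hcyc hreach hchain P hP hP0
    obtain ⟨w₀, hw₀mem, hw₀r⟩ := hreach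
    obtain ⟨W₀, hW₀⟩ := reaches_iff.1 hw₀r
    obtain ⟨u0, hcyc0⟩ := hcyc 0
    obtain ⟨R₀, hR₀cyc, hR₀perm⟩ := hcyc0.rotate hw₀mem
    have hRlen : R₀.length = (C 0).length := hR₀perm.length_eq
    have hL0 : (C 0).length ≠ 0 := by
      have := hcyc0.1; intro h; exact this (List.eq_nil_of_length_eq_zero h)
    refine ⟨W₀.length, fun _ => w₀, fun _ => P / (C 0).length,
      fun z => (W₀.map src).count z, fun _ => R₀,
      fun c => W₀ ++ npow R₀ (c 0 * (P / (C 0).length)), ?_, ?_, ?_, ?_, ?_⟩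
    · intro i
      have h' : P / (C 0).length ≠ 0 := fun h => hP0 (by
        have := Nat.div_mul_cancel (hP 0)
        rw [h, zero_mul] at this; exact this.symm)
      exact Nat.one_le_iff_ne_zero.2 h'
    · intro i; exact hR₀cyc.head_mem_srcs
    · intro i; exact hR₀cyc.2.2
    · intro i
      have hi : i = 0 := Fin.ext (by simpa using Nat.lt_one_iff.1 i.isLt)
      rw [hi]; exact hR₀perm.map src
    · intro c
      refine ⟨⟨w₀, hW₀.append ((hR₀cyc.2.1).npow _)⟩, ?_, ?_⟩
      · have h2 : (npow R₀ (c 0 * (P / (C 0).length))).length = P * c 0 := by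
          rw [length_npow, hRlen, mul_assoc, Nat.div_mul_cancel (hP 0), Nat.mul_comm]
        rw [List.length_append, h2]
        simp only [Fin.sum_univ_succ, Finset.univ_eq_empty, Finset.sum_empty]
        ring
      · intro z
        rw [List.map_append, List.count_append, map_npow, count_npow]
        simp only [Fin.sum_univ_succ, Finset.univ_eq_empty, Finset.sum_empty]
        ring
  | succ k ih =>
    intro v' C hcyc hreach hchain P hP hP0
    obtain ⟨w₀, hw₀mem, hw₀r⟩ := hreach
    obtain ⟨W₀, hW₀⟩ := reaches_iff.1 hw₀r
    obtain ⟨u0, hcyc0⟩ := hcyc 0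
    obtain ⟨R₀, hR₀cyc, hR₀perm⟩ := hcyc0.rotate hw₀mem
    have hRlen : R₀.length = (C 0).length := hR₀perm.length_eq
    -- exit vertex a₀ on C 0 reaching the next cycle
    obtain ⟨a₀, ha₀mem, hnext⟩ := hchain 0
    -- travel along R₀ from w₀ to a₀
    have ha₀R : a₀ ∈ R₀.map src := ((hR₀perm.map src).mem_iff).2 ha₀mem
    obtain ⟨p, e, sfx, hsplit, hesrc, hwp, hwes⟩ := mem_srcs_split hR₀cyc.2.1 ha₀R
    -- apply the induction hypothesis starting from a₀
    have ihres := ih a₀ (fun i => C i.succ) (fun i => hcyc i.succ)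
      (by exact hnext)
      (by
        intro i
        have h := hchain i.succ
        have h1 : (i.succ : Fin (k+1)).castSucc = (i.castSucc : Fin (k+1)).succ :=
          (Fin.succ_castSucc i).symm
        rw [h1] at h
        exact h)
      P (fun i => hP i.succ) hP0
    obtain ⟨s', wit', Qc', Kf', Rl', F', hQ1', hwitmem', hnodup', hperm', hF'⟩ := ihres
    refine ⟨W₀.length + p.length + s', Fin.cases w₀ wit', Fin.cases (P / (C 0).length) Qc',
      fun z => (W₀.map src).count z + (p.map src).count z + Kf' z, Fin.cases R₀ Rl',
      fun c => W₀ ++ npow R₀ (c 0 * (P / (C 0).length)) ++ p ++ F' (fun i => c i.succ),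
      ?_, ?_, ?_, ?_, ?_⟩
    · intro i
      induction i using Fin.cases with
      | zero =>
        simp only [Fin.cases_zero]
        refine Nat.one_le_iff_ne_zero.2 (fun h => hP0 ?_)
        have := Nat.div_mul_cancel (hP 0)
        rw [h, zero_mul] at this; exact this.symm
      | succ j => simpa using hQ1' j
    · intro i
      induction i using Fin.cases with
      | zero => simpa using hR₀cyc.head_mem_srcs
      | succ j => simpa using hwitmem' j
    · intro i
      induction i using Fin.cases with
      | zero => simpa using hR₀cyc.2.2
      | succ j => simpa using hnodup' j
    · intro i
      induction i using Fin.cases with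
      | zero => simpa using hR₀perm.map src
      | succ j => simpa using hperm' j
    · intro c
      obtain ⟨⟨w', hw'⟩, hlen', hcount'⟩ := hF' (fun i => c i.succ)
      refine ⟨⟨w', ?_⟩, ?_, ?_⟩
      · refine ((hW₀.append ((hR₀cyc.2.1).npow _)).append hwp).append hw'
      · have h2 : (npow R₀ (c 0 * (P / (C 0).length))).length = P * c 0 := by
          rw [length_npow, hRlen, mul_assoc, Nat.div_mul_cancel (hP 0), Nat.mul_comm]
        rw [List.length_append, List.length_append, List.length_append, h2, hlen']
        simp only [Fin.sum_univ_succ]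
        ring
      · intro z
        rw [List.map_append, List.count_append, List.map_append, List.count_append,
          List.map_append, List.count_append, map_npow, count_npow, hcount' z]
        simp only [Fin.sum_univ_succ, Fin.cases_zero, Fin.cases_succ]
        ring
end PolyGrowth

namespace PolyGrowth
open List

variable {V E : Type*} {src tgt : E → V}

lemma chain_le_d [Fintype V] [Fintype E] {v : V} {c₂ : ℝ} (hc₂ : 0 < c₂) {d N k : ℕ}
    (hub : ∀ n ≥ N, (pathCount src tgt v n : ℝ) ≤ c₂ * (n : ℝ) ^ d)
    (C : Fin (k + 1) → List E)
    (hcyc : ∀ i, IsSimpleCycle src tgt (C i))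
    (hdisj : ∀ i j, i ≠ j → CyclesDisjoint src (C i) (C j))
    (hreach : ReachesCycle src tgt v (C 0))
    (hchain : ∀ i : Fin k, CycleReachesCycle src tgt (C i.castSucc) (C i.succ)) :
    k ≤ d := by
  classical
  by_contra hkd
  push_neg at hkd
  have hk1 : 1 ≤ k := by omega
  set P := ∏ i, (C i).length with hPdef
  have hlen0 : ∀ i, (C i).length ≠ 0 := fun i => by
    obtain ⟨u, hu⟩ := isSimpleCycle_iff.1 (hcyc i)
    simpa using hu.1
  have hP0 : P ≠ 0 := Finset.prod_ne_zero_iff.2 (fun i _ => hlen0 i)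
  have hP1 : 1 ≤ P := Nat.one_le_iff_ne_zero.2 hP0
  have hPdvd : ∀ i, (C i).length ∣ P := fun i => Finset.dvd_prod_of_mem _ (Finset.mem_univ i)
  obtain ⟨s, wit, Qc, Kf, Rl, F, hQ1, hwitmem, hnodup, hperm, hF⟩ :=
    chain_paths v C (fun i => isSimpleCycle_iff.1 (hcyc i)) hreach hchain P hPdvd hP0
  have hcnt : ∀ i j, (((Rl j).map src).count (wit i)) = if i = j then 1 else 0 := by
    intro i j
    by_cases hij : i = j
    · subst hij; rw [if_pos rfl]; exact List.count_eq_one_of_mem (hnodup i) (hwitmem i)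
    · rw [if_neg hij]
      apply List.count_eq_zero_of_not_mem
      intro hmem
      have h1 : OnCycle src (C j) (wit i) := ((hperm j).mem_iff).1 hmem
      have h2 : OnCycle src (C i) (wit i) := ((hperm i).mem_iff).1 (hwitmem i)
      exact hdisj i j hij (wit i) ⟨h2, h1⟩
  have hsumred : ∀ (c : Fin (k+1) → ℕ) i,
      ∑ j, c j * Qc j * (((Rl j).map src).count (wit i)) = c i * Qc i := by
    intro c i
    rw [Finset.sum_congr rfl (fun j _ => by rw [hcnt i j])]
    simp [mul_ite, Finset.sum_ite_eq]
  have hkey : ∀ m : ℕ, 1 ≤ m →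
      ((m+1) ^ k : ℕ) ≤ pathCount src tgt v (s + P * (k * m)) := by
    intro m hm
    have hcard : Nat.card (Fin k → Fin (m+1)) = (m+1)^k := by
      simp [Nat.card_eq_fintype_card]
    rw [← hcard]
    set cfun : (Fin k → Fin (m+1)) → (Fin (k+1) → ℕ) :=
      fun b => Fin.cases (k * m - ∑ j, (b j : ℕ)) (fun j => (b j : ℕ)) with hcfun
    have hsum : ∀ b : Fin k → Fin (m+1), ∑ i, cfun b i = k * m := by
      intro b
      have hble : ∑ j, (b j : ℕ) ≤ k * m := by
        calc ∑ j, (b j : ℕ) ≤ ∑ _j : Fin k, m :=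
              Finset.sum_le_sum (fun j _ => Nat.lt_succ_iff.1 (b j).isLt)
        _ = k * m := by simp [Finset.sum_const, mul_comm]
      rw [Fin.sum_univ_succ]
      simp only [hcfun, Fin.cases_zero, Fin.cases_succ]
      omega
    apply le_pathCount (v := v) (by positivity) (f := fun b => F (cfun b))
    · intro b
      obtain ⟨hw, hlen, -⟩ := hF (cfun b)
      exact ⟨by rw [hlen, hsum b], hw⟩
    · intro b b' hbb
      obtain ⟨-, -, hcount⟩ := hF (cfun b)
      obtain ⟨-, -, hcount'⟩ := hF (cfun b')
      funext j
      have h1 := hcount (wit j.succ)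
      have h2 := hcount' (wit j.succ)
      have hbb' : F (cfun b) = F (cfun b') := hbb
      rw [hbb', h2] at h1
      rw [hsumred, hsumred] at h1
      have h3 : cfun b' j.succ = cfun b j.succ := by
        have := Nat.add_left_cancel h1
        exact Nat.eq_of_mul_eq_mul_right (hQ1 j.succ) this
      simp only [hcfun, Fin.cases_succ] at h3
      exact Fin.ext h3.symm
  -- asymptotics
  set B : ℝ := (s : ℝ) + P * k with hB
  have hB1 : (1 : ℝ) ≤ B := by
    have : (1 : ℝ) ≤ (P : ℝ) * k := by
      have : (1 : ℕ) ≤ P * k := Nat.one_le_iff_ne_zero.2 (by positivity)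
      exact_mod_cast this
    have hs : (0 : ℝ) ≤ (s : ℝ) := Nat.cast_nonneg s
    linarith
  set m := max N 1 + ⌈c₂ * B ^ d⌉₊ with hm
  have hm1 : 1 ≤ m := by omega
  have hmN : N ≤ m := by omega
  have hnN : N ≤ s + P * (k * m) := by
    have h1 : m ≤ k * m := Nat.le_mul_of_pos_left m (by omega)
    have h2 : k * m ≤ P * (k * m) := Nat.le_mul_of_pos_left _ (by omega)
    omega
  have hlb := hkey m hm1
  have hub' := hub _ hnN
  have hcast : ((m+1:ℕ) : ℝ) ^ k ≤ (pathCount src tgt v (s + P * (k * m)) : ℝ) := by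
    exact_mod_cast hlb
  have hnle : ((s + P * (k * m) : ℕ) : ℝ) ≤ B * (m + 1) := by
    push_cast
    have h1 : (1:ℝ) ≤ (m:ℝ) := by exact_mod_cast hm1
    have hs : (0 : ℝ) ≤ (s : ℝ) := Nat.cast_nonneg s
    have hP1' : (1:ℝ) ≤ (P:ℝ) := by exact_mod_cast hP1
    have hk1' : (1:ℝ) ≤ (k:ℝ) := by exact_mod_cast hk1
    rw [hB]
    nlinarith
  have hm1R : (1:ℝ) ≤ (m:ℝ) + 1 := by
    have : (0:ℝ) ≤ (m:ℝ) := Nat.cast_nonneg m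
    linarith
  have hchain2 : ((m:ℝ)+1) ^ (d+1) ≤ c₂ * (B * ((m:ℝ)+1)) ^ d := by
    calc ((m:ℝ)+1) ^ (d+1) ≤ ((m:ℝ)+1) ^ k := pow_le_pow_right₀ hm1R (by omega)
    _ = ((m+1:ℕ):ℝ) ^ k := by push_cast; ring_nf
    _ ≤ (pathCount src tgt v (s + P * (k * m)) : ℝ) := hcast
    _ ≤ c₂ * ((s + P * (k * m) : ℕ) : ℝ) ^ d := hub'
    _ ≤ c₂ * (B * ((m:ℝ)+1)) ^ d := by
        apply mul_le_mul_of_nonneg_left _ (le_of_lt hc₂)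
        apply pow_le_pow_left₀ (Nat.cast_nonneg _) hnle
  have hsplit : ((m:ℝ)+1) ^ (d+1) = ((m:ℝ)+1) ^ d * ((m:ℝ)+1) := by ring
  have hrhs : c₂ * (B * ((m:ℝ)+1)) ^ d = (c₂ * B ^ d) * ((m:ℝ)+1) ^ d := by
    rw [mul_pow]; ring
  rw [hsplit, hrhs] at hchain2
  have hpowpos : (0:ℝ) < ((m:ℝ)+1) ^ d := by positivity
  have hfin : (m:ℝ) + 1 ≤ c₂ * B ^ d := by
    have := hchain2
    rw [mul_comm (c₂ * B ^ d) _] at this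
    exact le_of_mul_le_mul_left (by linarith [this]) hpowpos
  have hceil : c₂ * B ^ d ≤ (⌈c₂ * B ^ d⌉₊ : ℝ) := Nat.le_ceil _
  have hmge : (⌈c₂ * B ^ d⌉₊ : ℝ) ≤ (m : ℝ) := by
    have : (⌈c₂ * B ^ d⌉₊ : ℕ) ≤ m := by omega
    exact_mod_cast this
  linarith

end PolyGrowth

namespace PolyGrowth
open List

variable {V E : Type*} {src tgt : E → V}

/-- Build a walk from a decomposition into loop blocks. -/
noncomputable def build (src tgt : E → V) : List (E × ℕ) → List E
  | [] => []
  | (p :: ds) => npow (cycAt src tgt (src p.1)) p.2 ++ p.1 :: build src tgt ds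

@[simp] lemma build_nil : build src tgt [] = [] := rfl

lemma build_cons (p : E × ℕ) (ds : List (E × ℕ)) :
    build src tgt (p :: ds) =
      npow (cycAt src tgt (src p.1)) p.2 ++ p.1 :: build src tgt ds := rfl

lemma build_append (ds ds' : List (E × ℕ)) :
    build src tgt (ds ++ ds') = build src tgt ds ++ build src tgt ds' := by
  induction ds with
  | nil => simp
  | cons p ds ih => rw [cons_append, build_cons, build_cons, ih]; simp

lemma fst_mem_build {p : E × ℕ} {ds : List (E × ℕ)} (h : p ∈ ds) :
    p.1 ∈ build src tgt ds := by
  induction ds with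
  | nil => simp at h
  | cons q ds ih =>
    rw [build_cons]
    rcases List.mem_cons.1 h with rfl | h
    · simp
    · simp only [mem_append, mem_cons]
      exact Or.inr (Or.inr (ih h))

lemma cyc_srcs_subset_build {p : E × ℕ} {ds : List (E × ℕ)} (h : p ∈ ds) (hp : p.2 ≠ 0) :
    ((cycAt src tgt (src p.1)).map src) ⊆ (build src tgt ds).map src := by
  induction ds with
  | nil => simp at h
  | cons q ds ih =>
    rw [build_cons]
    rcases List.mem_cons.1 h with rfl | h
    · intro z hz
      simp only [map_append, mem_append]
      left
      rw [map_npow]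
      exact subset_npow hp hz
    · intro z hz
      simp only [map_append, map_cons, mem_append, mem_cons]
      right; right
      exact ih h hz

lemma length_build_cons (p : E × ℕ) (ds : List (E × ℕ)) :
    (build src tgt (p :: ds)).length =
      p.2 * (cycAt src tgt (src p.1)).length + 1 + (build src tgt ds).length := by
  rw [build_cons]; simp [length_npow]; ring

lemma chain_reaches_of_reaches {a b : V} {L : List V} (h : List.Chain (Reaches src tgt) b L)
    (hab : Reaches src tgt a b) : List.Chain (Reaches src tgt) a L := by
  cases h with
  | singleton => exact List.Chain.nil
  | cons_cons hr hc => exact List.Chain.cons (reaches_trans hab hr) hc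

/-- Main decomposition: every walk from a reachable vertex decomposes into loop blocks. -/
lemma decomp {v₀ : V} (hUC : UC src tgt v₀) :
    ∀ (n : ℕ) (l : List E) (u w : V), l.length ≤ n → RV src tgt v₀ u →
      Walk src tgt u w l →
      ∃ ds : List (E × ℕ),
        l = build src tgt ds ∧
        ((ds.map (fun p => src p.1)).Nodup) ∧
        (∀ p ∈ ds, p.2 ≠ 0 → Cyc src tgt (src p.1) (cycAt src tgt (src p.1))) ∧
        List.Chain (Reaches src tgt) u (ds.map (fun p => src p.1)) ∧
        List.Pairwise (fun x y : E × ℕ =>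
          x.2 ≠ 0 → y.2 ≠ 0 → src x.1 ∉ (cycAt src tgt (src y.1)).map src) ds := by
  intro n
  induction n with
  | zero =>
    intro l u w hl _ _
    have : l = [] := List.eq_nil_of_length_eq_zero (Nat.le_zero.1 hl)
    subst this
    exact ⟨[], rfl, by simp, by simp, List.Chain.nil, by simp⟩
  | succ n ihn =>
    intro l u w hl hr hw
    cases l with
    | nil => exact ⟨[], rfl, by simp, by simp, List.Chain.nil, by simp⟩
    | cons e₀ t =>
      have hu : u ∈ (e₀ :: t).map src := by simp [hw.head_src]
      obtain ⟨q, e, rest, heq, hesrc, hwq, hwrest, hnrest⟩ := walk_split_last hw hu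
      obtain ⟨a, hq, hqcyc⟩ :=
        closed_walk_npow hUC q.length q u le_rfl hr hwq
      -- normalize the exponent when q is empty
      rcases em (q = []) with hqnil | hqne
      · subst hqnil
        -- a may be junk; use 0
        have hlen : rest.length ≤ n := by
          have := congrArg List.length heq
          simp only [length_cons, nil_append, length_append] at this hl
          omega
        obtain ⟨ds', hb', hnd', hcyc', hch', hpw'⟩ :=
          ihn rest (tgt e) w hlen (hr.extend (by
            have : Walk src tgt u (tgt e) [e] := by
              rw [walk_singleton_iff]; exact ⟨hesrc, rfl⟩
            exact this)) hwrest
        refine ⟨(e, 0) :: ds', ?_, ?_, ?_, ?_, ?_⟩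
        · rw [build_cons, ← hb']
          simp only [npow_zero, nil_append]
          simpa using heq
        · simp only [map_cons, nodup_cons]
          constructor
          · rw [hesrc]
            intro hmem
            apply hnrest
            simp only [List.mem_map] at hmem ⊢
            obtain ⟨p, hp, hps⟩ := hmem
            exact ⟨p.1, by rw [hb']; exact fst_mem_build hp, hps⟩
          · exact hnd'
        · intro p hp hp2
          rcases List.mem_cons.1 hp with rfl | hp
          · simp at hp2
          · exact hcyc' p hp hp2
        · refine List.Chain.cons (by
            show Reaches src tgt u (src e)
            rw [hesrc]; exact Or.inl rfl) ?_
          apply chain_reaches_of_reaches hch'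
          exact reaches_iff.2 ⟨[e], by rw [walk_singleton_iff]; exact ⟨rfl, rfl⟩⟩
        · refine List.pairwise_cons.2 ⟨?_, hpw'⟩
          intro p hp h0 hp2
          exact absurd rfl h0
      · have hcyca := hqcyc hqne
        have ha0 : a ≠ 0 := by
          rintro rfl
          simp [npow] at hq
          exact hqne hq
        have hlen : rest.length ≤ n := by
          have := congrArg List.length heq
          have hq1 : 1 ≤ q.length := by
            cases q with | nil => exact absurd rfl hqne | cons x xs => simp
          simp only [length_cons, length_append] at this hl
          omega
        obtain ⟨ds', hb', hnd', hcyc', hch', hpw'⟩ :=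
          ihn rest (tgt e) w hlen (hr.extend (hwq.append (by
            rw [walk_singleton_iff]; exact ⟨hesrc, rfl⟩))) hwrest
        refine ⟨(e, a) :: ds', ?_, ?_, ?_, ?_, ?_⟩
        · rw [build_cons, ← hb', hesrc, ← hq]
          simpa using heq
        · simp only [map_cons, nodup_cons]
          constructor
          · rw [hesrc]
            intro hmem
            apply hnrest
            simp only [List.mem_map] at hmem ⊢
            obtain ⟨p, hp, hps⟩ := hmem
            exact ⟨p.1, by rw [hb']; exact fst_mem_build hp, hps⟩
          · exact hnd'
        · intro p hp hp2
          rcases List.mem_cons.1 hp with rfl | hp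
          · rw [hesrc]; exact hcyca
          · exact hcyc' p hp hp2
        · refine List.Chain.cons (by
            show Reaches src tgt u (src e)
            rw [hesrc]; exact Or.inl rfl) ?_
          apply chain_reaches_of_reaches hch'
          exact reaches_iff.2 ⟨[e], by rw [walk_singleton_iff]; exact ⟨rfl, rfl⟩⟩
        · refine List.pairwise_cons.2 ⟨?_, hpw'⟩
          intro p hp h0 hp2
          show src e ∉ (cycAt src tgt (src p.1)).map src
          rw [hesrc]
          intro hmem
          apply hnrest
          have hsub := cyc_srcs_subset_build (src := src) (tgt := tgt) hp hp2
          rw [← hb'] at hsub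
          exact hsub hmem

end PolyGrowth

namespace PolyGrowth
open List

variable {V E : Type*} {src tgt : E → V}

/-- nonzero-entry filter -/
def nzf : List (E × ℕ) → List (E × ℕ) := List.filter (fun p => p.2 != 0)

lemma nzf_def (ds : List (E × ℕ)) : nzf ds = ds.filter (fun p => p.2 != 0) := rfl

lemma mem_nzf {p : E × ℕ} {ds : List (E × ℕ)} :
    p ∈ nzf ds ↔ p ∈ ds ∧ p.2 ≠ 0 := by
  rw [nzf, List.mem_filter, bne_iff_ne]

lemma zero_pairs_eq : ∀ {P P' : List (E × ℕ)},
    P.map Prod.fst = P'.map Prod.fst → (∀ p ∈ P, p.2 = 0) → (∀ p ∈ P', p.2 = 0) →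
    P = P' := by
  intro P
  induction P with
  | nil =>
    intro P' hm _ _
    exact (List.map_eq_nil_iff.1 hm.symm).symm  
  | cons p T ih =>
    intro P' hm h0 h0'
    cases P' with
    | nil => simp at hm
    | cons p' T' =>
      simp only [map_cons, List.cons_eq_cons] at hm
      have hp : p = p' := by
        have h1 := h0 p (List.mem_cons_self)
        have h2 := h0' p' (List.mem_cons_self)
        exact Prod.ext hm.1 (h1.trans h2.symm)
      rw [hp, ih hm.2 (fun q hq => h0 q (List.mem_cons_of_mem p hq))
        (fun q hq => h0' q (List.mem_cons_of_mem p' hq))]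

lemma recon : ∀ {P P' : List (E × ℕ)},
    P.map Prod.fst = P'.map Prod.fst → nzf P = nzf P' →
    (P.map Prod.fst).Nodup → P = P' := by
  intro P
  induction P with
  | nil =>
    intro P' hm _ _
    exact (List.map_eq_nil_iff.1 hm.symm).symm
  | cons p T ih =>
    intro P' hm hf hnd
    cases P' with
    | nil => simp at hm
    | cons p' T' =>
      simp only [map_cons, List.cons_eq_cons] at hm
      simp only [map_cons, nodup_cons] at hnd
      by_cases h1 : p.2 = 0 <;> by_cases h2 : p'.2 = 0
      · have hp : p = p' := Prod.ext hm.1 (h1.trans h2.symm)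
        rw [hp]
        rw [nzf_def, nzf_def, List.filter_cons_of_neg (by simpa using h1),
          List.filter_cons_of_neg (by simpa using h2)] at hf
        rw [ih hm.2 hf hnd.2]
      · exfalso
        rw [nzf_def, nzf_def, List.filter_cons_of_neg (by simpa using h1),
          List.filter_cons_of_pos (by simpa using h2)] at hf
        have : p' ∈ T := by
          have h3 : p' ∈ T.filter (fun p => p.2 != 0) := by
            rw [hf]; exact List.mem_cons_self
          exact ((List.filter_sublist (l := T)).subset h3)
        apply hnd.1
        rw [hm.1]
        exact List.mem_map_of_mem (f := Prod.fst) this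
      · exfalso
        rw [nzf_def, nzf_def, List.filter_cons_of_pos (by simpa using h1),
          List.filter_cons_of_neg (by simpa using h2)] at hf
        have : p ∈ T' := by
          have h3 : p ∈ T'.filter (fun p => p.2 != 0) := by
            rw [← hf]; exact List.mem_cons_self
          exact ((List.filter_sublist (l := T')).subset h3)
        apply hnd.1
        rw [hm.2]
        exact List.mem_map_of_mem (f := Prod.fst) this
      · rw [nzf_def, nzf_def, List.filter_cons_of_pos (by simpa using h1),
          List.filter_cons_of_pos (by simpa using h2)] at hf
        obtain ⟨hpq, hTq⟩ := List.cons_eq_cons.1 hf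
        rw [hpq, ih hm.2 hTq hnd.2]

lemma unique_middle {α : Type*} {c : α} : ∀ {A A' B B' : List α},
    A ++ c :: B = A' ++ c :: B' → c ∉ A → c ∉ A' → A = A' ∧ B = B' := by
  intro A
  induction A with
  | nil =>
    intro A' B B' heq _ hc'
    cases A' with
    | nil =>
      simp only [nil_append, List.cons_eq_cons] at heq
      exact ⟨rfl, heq.2⟩
    | cons a T =>
      exfalso
      simp only [nil_append, cons_append, List.cons_eq_cons] at heq
      apply hc'
      rw [heq.1]
      exact List.mem_cons_self
  | cons a T ih =>
    intro A' B B' heq hc hc'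
    cases A' with
    | nil =>
      exfalso
      simp only [nil_append, cons_append, List.cons_eq_cons] at heq
      exact hc (heq.1 ▸ List.mem_cons_self)
    | cons a' T' =>
      simp only [cons_append, List.cons_eq_cons] at heq
      obtain ⟨h1, h2⟩ := ih heq.2 (fun h => hc (List.mem_cons_of_mem a h))
        (fun h => hc' (List.mem_cons_of_mem a' h))
      exact ⟨by rw [heq.1, h1], h2⟩

lemma filter_split {f : E × ℕ → Bool} : ∀ {P D : List (E × ℕ)} {q : E × ℕ},
    P.filter f = D ++ [q] →
    ∃ X Y, P = X ++ q :: Y ∧ X.filter f = D ∧ Y.filter f = [] ∧ f q = true := by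
  intro P
  induction P with
  | nil => intro D q h; simp at h
  | cons p T ih =>
    intro D q h
    by_cases hp : f p
    · rw [List.filter_cons_of_pos hp] at h
      cases D with
      | nil =>
        simp only [nil_append, List.cons_eq_cons] at h
        obtain ⟨rfl, hT⟩ := h
        exact ⟨[], T, rfl, rfl, hT, hp⟩
      | cons d D' =>
        simp only [cons_append, List.cons_eq_cons] at h
        obtain ⟨rfl, hT⟩ := h
        obtain ⟨X, Y, rfl, hX, hY, hq⟩ := ih hT
        exact ⟨p :: X, Y, rfl, by rw [List.filter_cons_of_pos hp, hX], hY, hq⟩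
    · rw [List.filter_cons_of_neg (by simpa using hp)] at h
      obtain ⟨X, Y, rfl, hX, hY, hq⟩ := ih h
      exact ⟨p :: X, Y, rfl, by
        rw [List.filter_cons_of_neg (by simpa using hp), hX], hY, hq⟩

lemma filter_nil_forall {f : E × ℕ → Bool} {P : List (E × ℕ)}
    (h : P.filter f = []) : ∀ p ∈ P, f p = false := by
  intro p hp
  by_contra hpf
  have : p ∈ P.filter f := List.mem_filter.2 ⟨hp, by simpa using hpf⟩
  rw [h] at this
  simp at this

lemma build_injective {ds ds' : List (E × ℕ)}
    (hfst : ds.map Prod.fst = ds'.map Prod.fst)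
    (hnd : (ds.map Prod.fst).Nodup)
    (hdrop : (nzf ds).dropLast = (nzf ds').dropLast)
    (hlast : ((nzf ds).getLast?).map Prod.fst = ((nzf ds').getLast?).map Prod.fst)
    (hlen : (build src tgt ds).length = (build src tgt ds').length)
    (hc : ∀ p ∈ ds, p.2 ≠ 0 → (cycAt src tgt (src p.1)).length ≠ 0) :
    ds = ds' := by
  rcases List.eq_nil_or_concat (nzf ds) with hF | ⟨D, q, hF⟩
  · -- no nonzero entries on either side
    have hF' : nzf ds' = [] := by
      rw [hF] at hlast
      simp only [List.getLast?_nil, Option.map_none] at hlast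
      cases h : (nzf ds').getLast? with
      | none => exact List.getLast?_eq_none_iff.1 h
      | some q => rw [h] at hlast; simp at hlast
    apply zero_pairs_eq hfst
    · intro p hp
      have := filter_nil_forall (f := fun p => p.2 != 0) hF p hp
      simpa using this
    · intro p hp
      have := filter_nil_forall (f := fun p => p.2 != 0) hF' p hp
      simpa using this
  · rw [List.concat_eq_append] at hF
    rcases List.eq_nil_or_concat (nzf ds') with hF' | ⟨D', q', hF'⟩
    · exfalso
      rw [hF, hF'] at hlast
      rw [List.getLast?_concat] at hlast
      simp at hlast
    rw [List.concat_eq_append] at hF'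
    have hD : D = D' := by
      rw [hF, hF', List.dropLast_concat, List.dropLast_concat] at hdrop
      exact hdrop
    have hq1 : q.1 = q'.1 := by
      rw [hF, hF', List.getLast?_concat, List.getLast?_concat] at hlast
      simpa using hlast
    obtain ⟨X, Y, rfl, hX, hY, hfq⟩ := filter_split (f := fun p => p.2 != 0) hF
    obtain ⟨X', Y', rfl, hX', hY', hfq'⟩ := filter_split (f := fun p => p.2 != 0) hF'
    -- align the middles
    have hfst' : X.map Prod.fst ++ q.1 :: Y.map Prod.fst =
        X'.map Prod.fst ++ q.1 :: Y'.map Prod.fst := by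
      have := hfst
      simp only [map_append, map_cons] at this
      rw [← hq1] at this
      exact this
    have hndX : q.1 ∉ X.map Prod.fst := by
      have := hnd
      simp only [map_append, map_cons, List.nodup_append] at this
      intro hmem
      exact this.2.2 _ hmem _ (List.mem_cons_self) rfl
    have hndX' : q.1 ∉ X'.map Prod.fst := by
      have := hfst ▸ hnd
      simp only [map_append, map_cons, List.nodup_append] at this
      intro hmem
      rw [hq1] at hmem
      exact this.2.2 _ hmem _ (by rw [← hq1]; exact List.mem_cons_self) rfl
    obtain ⟨hXX, hYY⟩ := unique_middle hfst' hndX hndX'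
    have hXeq : X = X' := by
      apply recon hXX (by rw [show nzf X = X.filter (fun p => p.2 != 0) from rfl,
        show nzf X' = X'.filter (fun p => p.2 != 0) from rfl, hX, hX', hD])
      have := hnd
      simp only [map_append, List.nodup_append] at this
      exact this.1
    have hYeq : Y = Y' := by
      apply zero_pairs_eq hYY
      · intro p hp; have := filter_nil_forall hY p hp; simpa using this
      · intro p hp; have := filter_nil_forall hY' p hp; simpa using this
    have hq2 : q.2 = q'.2 := by
      subst hXeq; subst hYeq
      rw [build_append, build_append] at hlen
      simp only [List.length_append] at hlen
      have hlc : (build src tgt (q :: Y)).length = (build src tgt (q' :: Y)).length := by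
        omega
      rw [length_build_cons, length_build_cons, hq1] at hlc
      have hLne : (cycAt src tgt (src q.1)).length ≠ 0 :=
        hc q (List.mem_append.2 (Or.inr (List.mem_cons_self))) (by simpa using hfq)
      rw [hq1] at hLne
      have h1 := Nat.add_right_cancel hlc
      have h2 := Nat.add_right_cancel h1
      exact Nat.eq_of_mul_eq_mul_right (Nat.pos_of_ne_zero hLne) h2
    have hq : q = q' := Prod.ext hq1 hq2
    rw [hXeq, hYeq, hq]

lemma entry_le_length_build {ds : List (E × ℕ)}
    (hc : ∀ p ∈ ds, p.2 ≠ 0 → (cycAt src tgt (src p.1)).length ≠ 0) :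
    ∀ p ∈ ds, p.2 ≤ (build src tgt ds).length := by
  induction ds with
  | nil => intro p hp; simp at hp
  | cons r ds ih =>
    intro p hp
    rw [length_build_cons]
    rcases List.mem_cons.1 hp with rfl | hp
    · by_cases h0 : p.2 = 0
      · omega
      · have := hc p (List.mem_cons_self) h0
        have h1 : 1 ≤ (cycAt src tgt (src p.1)).length := Nat.pos_of_ne_zero this
        have : p.2 ≤ p.2 * (cycAt src tgt (src p.1)).length := Nat.le_mul_of_pos_right _ h1
        omega
    · have := ih (fun p hp => hc p (List.mem_cons_of_mem r hp)) p hp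
      omega

end PolyGrowth

namespace PolyGrowth
open List

variable {V E : Type*} {src tgt : E → V}

/-- Any two distinct canonical cycles arising in a decomposition are vertex-disjoint,
and the number of nonzero blocks is bounded by the longest cycle chain. -/
lemma nzf_length_le {v : V} (hUC : UC src tgt v) {K : ℕ}
    (hK : ∀ (m : ℕ) (C : Fin (m + 1) → List E),
      (∀ i, IsSimpleCycle src tgt (C i)) →
      (∀ i j, i ≠ j → CyclesDisjoint src (C i) (C j)) →
      ReachesCycle src tgt v (C 0) →
      (∀ i : Fin m, CycleReachesCycle src tgt (C i.castSucc) (C i.succ)) → m ≤ K)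
    {ds : List (E × ℕ)}
    (hcyc : ∀ p ∈ ds, p.2 ≠ 0 → Cyc src tgt (src p.1) (cycAt src tgt (src p.1)))
    (hch : List.Chain (Reaches src tgt) v (ds.map (fun p => src p.1)))
    (hpw : List.Pairwise (fun x y : E × ℕ =>
      x.2 ≠ 0 → y.2 ≠ 0 → src x.1 ∉ (cycAt src tgt (src y.1)).map src) ds) :
    (nzf ds).length ≤ K + 1 := by
  set F := nzf ds with hFdef
  rcases Nat.eq_zero_or_pos F.length with h0 | hpos
  · omega
  obtain ⟨m, hm⟩ : ∃ m, F.length = m + 1 := ⟨F.length - 1, by omega⟩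
  suffices hmK : m ≤ K by omega
  have hFsub : F.Sublist ds := List.filter_sublist (l := ds)
  have hFcyc : ∀ p ∈ F, Cyc src tgt (src p.1) (cycAt src tgt (src p.1)) := by
    intro p hp
    obtain ⟨hp1, hp2⟩ := mem_nzf.1 hp
    exact hcyc p hp1 hp2
  have hFpw : List.Pairwise
      (fun x y : E × ℕ => src x.1 ∉ (cycAt src tgt (src y.1)).map src) F := by
    refine (hpw.sublist hFsub).imp_of_mem ?_
    intro a b ha hb h
    exact h (mem_nzf.1 ha).2 (mem_nzf.1 hb).2
  haveI : IsTrans V (Reaches src tgt) := ⟨fun a b c => reaches_trans⟩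
  have hPW := List.isChain_iff_pairwise.1 hch
  have hFreach : List.Pairwise (Reaches src tgt)
      (v :: F.map (fun p => src p.1)) :=
    hPW.sublist (List.Sublist.cons₂ v (hFsub.map _))
  have hvreach : ∀ p ∈ F, Reaches src tgt v (src p.1) := by
    intro p hp
    exact (List.pairwise_cons.1 hFreach).1 _ (List.mem_map_of_mem hp)
  have hpairreach : ∀ (i j : ℕ) (hi : i < F.length) (hj : j < F.length), i < j →
      Reaches src tgt (src (F[i]'hi).1) (src (F[j]'hj).1) := by
    intro i j hi hj hij
    have := (List.pairwise_cons.1 hFreach).2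
    rw [List.pairwise_iff_getElem] at this
    have h := this i j (by simpa using hi) (by simpa using hj) hij
    rwa [List.getElem_map, List.getElem_map] at h
  have hpairdisj : ∀ (i j : ℕ) (hi : i < F.length) (hj : j < F.length), i < j →
      src (F[i]'hi).1 ∉ (cycAt src tgt (src (F[j]'hj).1)).map src := by
    intro i j hi hj hij
    exact List.pairwise_iff_getElem.1 hFpw i j hi hj hij
  -- the cycles from distinct positions are vertex-disjoint
  have hdisj2 : ∀ (i j : ℕ) (hi : i < F.length) (hj : j < F.length), i < j →
      ∀ z : V, ¬ (z ∈ (cycAt src tgt (src (F[i]'hi).1)).map src ∧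
        z ∈ (cycAt src tgt (src (F[j]'hj).1)).map src) := by
    intro i j hi hj hij z ⟨hz1, hz2⟩
    set wa := src (F[i]'hi).1
    set wb := src (F[j]'hj).1
    have hcyca := hFcyc _ (List.getElem_mem hi)
    have hcycb := hFcyc _ (List.getElem_mem hj)
    -- z is reachable from v
    obtain ⟨pz, ez, sz, hsplz, hsrcz, hwpz, hwz⟩ := mem_srcs_split hcyca.2.1 hz1
    have hvz : Reaches src tgt v z :=
      reaches_trans (hvreach _ (List.getElem_mem hi)) (reaches_iff.2 ⟨pz, hwpz⟩)
    have hrvz : RV src tgt v z := reaches_iff.1 hvz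
    obtain ⟨X, hXcyc, hXperm⟩ := hcyca.rotate hz1
    obtain ⟨Y, hYcyc, hYperm⟩ := hcycb.rotate hz2
    have hXY : X = Y := hUC z X Y hrvz hXcyc hYcyc
    apply hpairdisj i j hi hj hij
    have h1 : wa ∈ X.map src := ((hXperm.map src).mem_iff).2 hcyca.head_mem_srcs
    rw [hXY] at h1
    exact ((hYperm.map src).mem_iff).1 h1
  -- build the chain of cycles
  have hmlt : ∀ i : Fin (m + 1), (i : ℕ) < F.length := fun i => by omega
  set C : Fin (m + 1) → List E := fun i => cycAt src tgt (src (F[(i : ℕ)]'(hmlt i)).1)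
    with hC
  have hCmem : ∀ i : Fin (m+1), F[(i : ℕ)]'(hmlt i) ∈ F := fun i => List.getElem_mem _
  have := hK m C
    (fun i => isSimpleCycle_iff.2 ⟨_, hFcyc _ (hCmem i)⟩)
    (by
      intro i j hij z hz
      rcases Nat.lt_or_ge (i : ℕ) (j : ℕ) with h | h
      · exact hdisj2 (i : ℕ) (j : ℕ) (hmlt i) (hmlt j) h z hz
      · have hj : (j : ℕ) < (i : ℕ) := by
          rcases Nat.lt_or_ge (j : ℕ) (i : ℕ) with h' | h'
          · exact h'
          · exact absurd (Fin.ext (le_antisymm h h')).symm hij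
        exact hdisj2 (j : ℕ) (i : ℕ) (hmlt j) (hmlt i) hj z ⟨hz.2, hz.1⟩)
    (by
      refine ⟨src (F[(0 : ℕ)]'(hmlt 0)).1, ?_, ?_⟩
      · exact (hFcyc _ (hCmem 0)).head_mem_srcs
      · exact hvreach _ (hCmem 0))
    (by
      intro i
      refine ⟨src (F[((i.castSucc : Fin (m+1)) : ℕ)]'(hmlt i.castSucc)).1,
        (hFcyc _ (hCmem i.castSucc)).head_mem_srcs,
        src (F[((i.succ : Fin (m+1)) : ℕ)]'(hmlt i.succ)).1,
        (hFcyc _ (hCmem i.succ)).head_mem_srcs, ?_⟩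
      exact hpairreach _ _ _ _ (by simp))
  exact this

end PolyGrowth

namespace PolyGrowth
open List

variable {V E : Type*} {src tgt : E → V}

lemma count_upper [Fintype V] [Fintype E] {v : V} (hUC : UC src tgt v) {K : ℕ}
    (hK : ∀ (m : ℕ) (C : Fin (m + 1) → List E),
      (∀ i, IsSimpleCycle src tgt (C i)) →
      (∀ i j, i ≠ j → CyclesDisjoint src (C i) (C j)) →
      ReachesCycle src tgt v (C 0) →
      (∀ i : Fin m, CycleReachesCycle src tgt (C i.castSucc) (C i.succ)) → m ≤ K)
    (n : ℕ) (hn : n ≠ 0) :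
    pathCount src tgt v n ≤
      ((Fintype.card E + 1) ^ (Fintype.card V) * ((Fintype.card E + 1) ^ K *
        (Fintype.card E + 1))) * (n + 1) ^ K := by
  classical
  have hds : ∀ x : {l : List E // l.length = n ∧ ∃ w, Walk src tgt v w l},
      ∃ ds : List (E × ℕ),
        x.val = build src tgt ds ∧
        ((ds.map (fun p => src p.1)).Nodup) ∧
        (∀ p ∈ ds, p.2 ≠ 0 → Cyc src tgt (src p.1) (cycAt src tgt (src p.1))) ∧
        List.Chain (Reaches src tgt) v (ds.map (fun p => src p.1)) ∧
        List.Pairwise (fun x y : E × ℕ =>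
          x.2 ≠ 0 → y.2 ≠ 0 → src x.1 ∉ (cycAt src tgt (src y.1)).map src) ds := by
    intro x
    obtain ⟨w, hw⟩ := x.2.2
    exact decomp hUC x.val.length x.val v w le_rfl ⟨[], Walk.nil v⟩ hw
  have hfacts : ∀ (x : {l : List E // l.length = n ∧ ∃ w, Walk src tgt v w l})
      (ds : List (E × ℕ)),
      x.val = build src tgt ds →
      ((ds.map (fun p => src p.1)).Nodup) →
      (∀ p ∈ ds, p.2 ≠ 0 → Cyc src tgt (src p.1) (cycAt src tgt (src p.1))) →
      List.Chain (Reaches src tgt) v (ds.map (fun p => src p.1)) →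
      List.Pairwise (fun x y : E × ℕ =>
          x.2 ≠ 0 → y.2 ≠ 0 → src x.1 ∉ (cycAt src tgt (src y.1)).map src) ds →
      ds.length ≤ Fintype.card V ∧ (nzf ds).length ≤ K + 1 ∧
        (∀ p ∈ ds, p.2 ≤ n) ∧
        (∀ p ∈ ds, p.2 ≠ 0 → (cycAt src tgt (src p.1)).length ≠ 0) := by
    intro x ds hb hnd hcyc hch hpw
    have hlen : ds.length ≤ Fintype.card V := by
      have := hnd.length_le_card
      rwa [List.length_map] at this
    have hnz := nzf_length_le hUC hK hcyc hch hpw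
    have hcne : ∀ p ∈ ds, p.2 ≠ 0 → (cycAt src tgt (src p.1)).length ≠ 0 := by
      intro p hp h0
      have := (hcyc p hp h0).1
      simpa using this
    refine ⟨hlen, hnz, ?_, hcne⟩
    intro p hp
    have := entry_le_length_build hcne p hp
    rw [← hb, x.2.1] at this
    exact this
  set code : {l : List E // l.length = n ∧ ∃ w, Walk src tgt v w l} →
      (Fin (Fintype.card V) → Option E) × (Fin K → Option (E × Fin (n+1))) × Option E :=
    fun x =>
      ((fun i => ((hds x).choose.map Prod.fst)[(i : ℕ)]?),
       (fun i => (((nzf (hds x).choose).dropLast)[(i : ℕ)]?).map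
          (fun p => (p.1, (⟨min p.2 n, by omega⟩ : Fin (n+1))))),
       ((nzf (hds x).choose).getLast?).map Prod.fst) with hcode
  have hinj : Function.Injective code := by
    intro x y hxy
    obtain ⟨hb, hnd, hcyc, hch, hpw⟩ := (hds x).choose_spec
    obtain ⟨hb', hnd', hcyc', hch', hpw'⟩ := (hds y).choose_spec
    obtain ⟨hdlen, hdnz, hdval, hdc⟩ := hfacts x _ hb hnd hcyc hch hpw
    obtain ⟨hdlen', hdnz', hdval', hdc'⟩ := hfacts y _ hb' hnd' hcyc' hch' hpw'
    rw [hcode, Prod.mk.injEq, Prod.mk.injEq] at hxy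
    obtain ⟨h1, h2, h3⟩ := hxy
    have hfst : (hds x).choose.map Prod.fst = (hds y).choose.map Prod.fst := by
      apply List.ext_getElem?
      intro i
      by_cases hi : i < Fintype.card V
      · exact congrFun h1 ⟨i, hi⟩
      · rw [List.getElem?_eq_none (by rw [List.length_map]; omega),
          List.getElem?_eq_none (by rw [List.length_map]; omega)]
    have hdrop : (nzf (hds x).choose).dropLast = (nzf (hds y).choose).dropLast := by
      apply List.ext_getElem?
      intro i
      by_cases hi : i < K
      · have h := congrFun h2 ⟨i, hi⟩
        simp only at h
        cases hget : ((nzf (hds x).choose).dropLast)[i]? with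
        | none =>
          rw [hget] at h
          cases hget' : ((nzf (hds y).choose).dropLast)[i]? with
          | none => rfl
          | some p => rw [hget'] at h; simp at h
        | some p =>
          rw [hget] at h
          cases hget' : ((nzf (hds y).choose).dropLast)[i]? with
          | none => rw [hget'] at h; simp at h
          | some p' =>
            rw [hget'] at h
            simp only [Option.map_some, Option.some.injEq, Prod.mk.injEq,
              Fin.mk.injEq] at h
            have hpm : p ∈ (hds x).choose := by
              have hmem : p ∈ (nzf (hds x).choose).dropLast :=
                List.mem_of_getElem? hget
              exact (List.filter_sublist).subset
                ((List.dropLast_sublist _).subset hmem)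
            have hpm' : p' ∈ (hds y).choose := by
              have hmem : p' ∈ (nzf (hds y).choose).dropLast :=
                List.mem_of_getElem? hget'
              exact (List.filter_sublist).subset
                ((List.dropLast_sublist _).subset hmem)
            have hv : p.2 = p'.2 := by
              have e1 : min p.2 n = p.2 := min_eq_left (hdval p hpm)
              have e2 : min p'.2 n = p'.2 := min_eq_left (hdval' p' hpm')
              rw [e1, e2] at h
              exact h.2
            rw [Prod.ext h.1 hv]
      · rw [List.getElem?_eq_none (by rw [List.length_dropLast]; omega),
          List.getElem?_eq_none (by rw [List.length_dropLast]; omega)]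
    have hnodupfst : ((hds x).choose.map Prod.fst).Nodup := by
      have : (((hds x).choose.map Prod.fst).map src).Nodup := by
        rw [List.map_map]
        exact hnd
      exact this.of_map src
    have hlenb : (build src tgt (hds x).choose).length =
        (build src tgt (hds y).choose).length := by
      rw [← hb, ← hb', x.2.1, y.2.1]
    have hdseq := build_injective hfst hnodupfst hdrop h3 hlenb hdc
    apply Subtype.ext
    rw [hb, hb', hdseq]
  have hle := pathCount_le hn code hinj
  refine le_trans hle ?_
  have hcard : Nat.card ((Fin (Fintype.card V) → Option E) ×
      (Fin K → Option (E × Fin (n+1))) × Option E) =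
      (Fintype.card E + 1) ^ (Fintype.card V) *
        ((Fintype.card E * (n+1) + 1) ^ K * (Fintype.card E + 1)) := by
    simp [Nat.card_eq_fintype_card, Fintype.card_prod, Fintype.card_fun,
      Fintype.card_option, Fintype.card_fin]
  rw [hcard]
  have hBle : (Fintype.card E * (n+1) + 1) ^ K ≤
      (Fintype.card E + 1) ^ K * (n+1) ^ K := by
    rw [← mul_pow]
    apply Nat.pow_le_pow_left
    have h5 : 1 ≤ n + 1 := by omega
    calc Fintype.card E * (n+1) + 1 ≤ Fintype.card E * (n+1) + (n+1) :=
          Nat.add_le_add_left h5 _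
    _ = (Fintype.card E + 1) * (n+1) := by ring
  calc (Fintype.card E + 1) ^ (Fintype.card V) *
        ((Fintype.card E * (n+1) + 1) ^ K * (Fintype.card E + 1))
      ≤ (Fintype.card E + 1) ^ (Fintype.card V) *
        (((Fintype.card E + 1) ^ K * (n+1) ^ K) * (Fintype.card E + 1)) := by
        apply Nat.mul_le_mul_left
        exact Nat.mul_le_mul_right _ hBle
    _ = ((Fintype.card E + 1) ^ (Fintype.card V) * ((Fintype.card E + 1) ^ K *
        (Fintype.card E + 1))) * (n + 1) ^ K := by ring

end PolyGrowth

namespace PolyGrowth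
open List

variable {V E : Type*} {src tgt : E → V}

lemma exists_reachable_cycle [Fintype V] [Finite E] {v : V} (hUC : UC src tgt v)
    {n : ℕ} (hlong : Fintype.card V < n) (hpos : pathCount src tgt v n ≠ 0) :
    ∃ u, RV src tgt v u ∧ Cyc src tgt u (cycAt src tgt u) := by
  have hn0 : n ≠ 0 := by omega
  rw [pathCount_eq v hn0] at hpos
  have hne : Nonempty {l : List E // l.length = n ∧ ∃ w, Walk src tgt v w l} :=
    (Nat.card_ne_zero.1 hpos).1
  obtain ⟨⟨l, hlen, w, hw⟩⟩ := hne
  have hnd : ¬ (l.map src).Nodup := long_srcs_not_nodup (by omega)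
  obtain ⟨u, p, m, s, heq, hm, hs, hwp, hwm, hws⟩ := walk_dup_split hw hnd
  have hrv : RV src tgt v u := ⟨p, hwp⟩
  obtain ⟨a, hma, hcy⟩ := closed_walk_npow hUC m.length m u le_rfl hrv hwm
  exact ⟨u, hrv, hcy hm⟩

end PolyGrowth

open PolyGrowth in
theorem polyPathGrowth_degree_eq_max_cycle_chain' [Fintype V] [Fintype E]
    (src tgt : E → V) (v : V) (d : ℕ) (c₁ c₂ : ℝ) (hc₁ : 0 < c₁) (hc : c₁ ≤ c₂) (N : ℕ)
    (hgrowth : ∀ n ≥ N, c₁ * (n : ℝ) ^ d ≤ (pathCount src tgt v n : ℝ) ∧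
      (pathCount src tgt v n : ℝ) ≤ c₂ * (n : ℝ) ^ d) :
    IsGreatest {k : ℕ | ∃ C : Fin (k + 1) → List E,
      (∀ i, IsSimpleCycle src tgt (C i)) ∧
      (∀ i j, i ≠ j → CyclesDisjoint src (C i) (C j)) ∧
      ReachesCycle src tgt v (C 0) ∧
      (∀ i : Fin k, CycleReachesCycle src tgt (C i.castSucc) (C i.succ))} d := by
  classical
  set S := {k : ℕ | ∃ C : Fin (k + 1) → List E,
      (∀ i, IsSimpleCycle src tgt (C i)) ∧
      (∀ i j, i ≠ j → CyclesDisjoint src (C i) (C j)) ∧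
      ReachesCycle src tgt v (C 0) ∧
      (∀ i : Fin k, CycleReachesCycle src tgt (C i.castSucc) (C i.succ))} with hS
  have hlb : ∀ n ≥ N, c₁ * (n : ℝ) ^ d ≤ (pathCount src tgt v n : ℝ) :=
    fun n hn => (hgrowth n hn).1
  have hub : ∀ n ≥ N, (pathCount src tgt v n : ℝ) ≤ c₂ * (n : ℝ) ^ d :=
    fun n hn => (hgrowth n hn).2
  have hc₂ : 0 < c₂ := lt_of_lt_of_le hc₁ hc
  have hUC : UC src tgt v := uc_of_growth hc₂ hub
  -- S is nonempty
  have h0S : 0 ∈ S := by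
    set n₀ := N + Fintype.card V + 1 with hn₀def
    have hn₀ : n₀ ≥ N := by omega
    have hn₀pos : (0:ℝ) < (n₀ : ℝ) := by
      have : 0 < n₀ := by omega
      exact_mod_cast this
    have hpos : pathCount src tgt v n₀ ≠ 0 := by
      intro h
      have h1 := hlb n₀ hn₀
      rw [h] at h1
      have h2 : (0:ℝ) < c₁ * (n₀:ℝ)^d := mul_pos hc₁ (pow_pos hn₀pos d)
      simp only [Nat.cast_zero] at h1
      linarith
    obtain ⟨u, hrv, hcyc⟩ := exists_reachable_cycle hUC (by omega) hpos
    refine ⟨fun _ => cycAt src tgt u, fun i => isSimpleCycle_iff.2 ⟨u, hcyc⟩, ?_, ?_, ?_⟩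
    · intro i j hij
      exact absurd (Fin.ext (by omega : (i:ℕ) = (j:ℕ))) hij
    · exact ⟨u, hcyc.head_mem_srcs, reaches_iff.2 hrv⟩
    · intro i; exact i.elim0
  have hbdd : ∀ k ∈ S, k ≤ d := by
    rintro k ⟨C, h1, h2, h3, h4⟩
    exact chain_le_d hc₂ hub C h1 h2 h3 h4
  have hbddA : BddAbove S := ⟨d, fun k hk => hbdd k hk⟩
  have hKmem : sSup S ∈ S := Nat.sSup_mem ⟨0, h0S⟩ hbddA
  set K := sSup S with hKdef
  have hKd : K ≤ d := hbdd K hKmem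
  have hKbound : ∀ (m : ℕ) (C : Fin (m + 1) → List E),
      (∀ i, IsSimpleCycle src tgt (C i)) →
      (∀ i j, i ≠ j → CyclesDisjoint src (C i) (C j)) →
      ReachesCycle src tgt v (C 0) →
      (∀ i : Fin m, CycleReachesCycle src tgt (C i.castSucc) (C i.succ)) → m ≤ K :=
    fun m C hC1 hC2 hC3 hC4 => le_csSup hbddA ⟨C, hC1, hC2, hC3, hC4⟩
  have hdK : d ≤ K := by
    by_contra hlt
    push_neg at hlt
    set A := ((Fintype.card E + 1) ^ (Fintype.card V) * ((Fintype.card E + 1) ^ K *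
      (Fintype.card E + 1))) with hA
    set n := max N 1 + ⌈(A:ℝ) * 2^K / c₁⌉₊ + 1 with hn
    have hNle : N ≤ max N 1 := le_max_left N 1
    have hnN : n ≥ N := by omega
    have hn1 : 1 ≤ n := by omega
    have hc1' := hlb n hnN
    have hc2 := count_upper hUC hKbound n (by omega)
    have hc2' : (pathCount src tgt v n : ℝ) ≤ (A:ℝ) * ((n:ℝ)+1)^K := by
      calc (pathCount src tgt v n : ℝ) ≤ ((A * (n+1)^K : ℕ) : ℝ) := by exact_mod_cast hc2
      _ = (A:ℝ) * ((n:ℝ)+1)^K := by push_cast; ring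
    have hnR : (1:ℝ) ≤ (n:ℝ) := by exact_mod_cast hn1
    have h2n : ((n:ℝ)+1) ≤ 2 * (n:ℝ) := by linarith
    have hstep : c₁ * (n:ℝ)^d ≤ ((A:ℝ) * 2^K) * (n:ℝ)^K := by
      calc c₁ * (n:ℝ)^d ≤ (A:ℝ) * ((n:ℝ)+1)^K := le_trans hc1' hc2'
      _ ≤ (A:ℝ) * (2 * (n:ℝ))^K := by
          apply mul_le_mul_of_nonneg_left _ (Nat.cast_nonneg A)
          exact pow_le_pow_left₀ (by linarith) h2n K
      _ = ((A:ℝ) * 2^K) * (n:ℝ)^K := by rw [mul_pow]; ring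
    have hpow : (n:ℝ)^K * (n:ℝ) ≤ (n:ℝ)^d := by
      calc (n:ℝ)^K * (n:ℝ) = (n:ℝ)^(K+1) := by ring
      _ ≤ (n:ℝ)^d := pow_le_pow_right₀ hnR (by omega)
    have hmul : (c₁ * (n:ℝ)) * (n:ℝ)^K ≤ ((A:ℝ) * 2^K) * (n:ℝ)^K := by
      calc (c₁ * (n:ℝ)) * (n:ℝ)^K = c₁ * ((n:ℝ)^K * (n:ℝ)) := by ring
      _ ≤ c₁ * (n:ℝ)^d := mul_le_mul_of_nonneg_left hpow (le_of_lt hc₁)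
      _ ≤ ((A:ℝ) * 2^K) * (n:ℝ)^K := hstep
    have hnpos : (0:ℝ) < (n:ℝ)^K := pow_pos (by linarith) K
    have hfin : c₁ * (n:ℝ) ≤ (A:ℝ) * 2^K := le_of_mul_le_mul_right hmul hnpos
    have hdiv : (n:ℝ) ≤ (A:ℝ) * 2^K / c₁ := by
      rw [le_div_iff₀ hc₁]
      linarith
    have hceil : ((A:ℝ) * 2^K / c₁) ≤ (⌈(A:ℝ) * 2^K / c₁⌉₊ : ℝ) := Nat.le_ceil _
    have hnge : (⌈(A:ℝ) * 2^K / c₁⌉₊ : ℝ) + 1 ≤ (n : ℝ) := by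
      have : ⌈(A:ℝ) * 2^K / c₁⌉₊ + 1 ≤ n := by omega
      exact_mod_cast this
    linarith
  have hdKeq : d = K := le_antisymm hdK hKd
  exact ⟨hdKeq ▸ hKmem, fun k hk => hbdd k hk⟩

/-- If the number of length-`n` paths from `v` grows like `n ^ d`, then
`d` is the largest `k` for which there are pairwise vertex-disjoint simple cycles
`C₀, …, C_k` with `v ≥ C₀ ≥ C₁ ≥ ⋯ ≥ C_k`. -/
theorem polyPathGrowth_degree_eq_max_cycle_chain [Fintype V] [Fintype E]
    (src tgt : E → V) (v : V) (d : ℕ) (c₁ c₂ : ℝ) (hc₁ : 0 < c₁) (hc : c₁ ≤ c₂) (N : ℕ)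
    (hgrowth : ∀ n ≥ N, c₁ * (n : ℝ) ^ d ≤ (pathCount src tgt v n : ℝ) ∧
      (pathCount src tgt v n : ℝ) ≤ c₂ * (n : ℝ) ^ d) :
    IsGreatest {k : ℕ | ∃ C : Fin (k + 1) → List E,
      (∀ i, IsSimpleCycle src tgt (C i)) ∧
      (∀ i j, i ≠ j → CyclesDisjoint src (C i) (C j)) ∧
      ReachesCycle src tgt v (C 0) ∧
      (∀ i : Fin k, CycleReachesCycle src tgt (C i.castSucc) (C i.succ))} d := by
  exact polyPathGrowth_degree_eq_max_cycle_chain' src tgt v d c₁ c₂ hc₁ hc N hgrowth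
end

section
/- If a finite directed multigraph G has no intersecting cycles, then every infinite path p in G is eventually periodic: there exist N ∈ ℕ and q ≥ 1 such that p(n + q) = p(n) for all n ≥ N. -/
open Filter Topology

variable {V E : Type*}

section Aux

variable {src tgt : E → V}

private lemma mkCycle (src tgt : E → V) (f : ℕ → E) (d : ℕ) (hd : 1 ≤ d)
    (hchain : ∀ k, k + 1 < d → tgt (f k) = src (f (k + 1)))
    (hclosed : tgt (f (d - 1)) = src (f 0))
    (hnodup : ∀ a b, a < b → b < d → src (f a) ≠ src (f b)) :
    IsSimpleCycle src tgt (List.ofFn fun k : Fin d => f k) ∧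
      StartsAt src (List.ofFn fun k : Fin d => f k) (src (f 0)) ∧
      ∀ k, k < d → (List.ofFn fun k : Fin d => f k)[k]? = some (f k) := by
  set C : List E := List.ofFn fun k : Fin d => f k with hCdef
  have hlen : C.length = d := List.length_ofFn
  have hget : ∀ k, k < d → C[k]? = some (f k) := by
    intro k hk
    simp [hCdef, List.getElem?_ofFn, List.ofFnNthVal, hk]
  have hne : C ≠ [] := by
    intro h
    rw [h] at hlen
    simp at hlen
    omega
  have hstart : StartsAt src C (src (f 0)) := by
    unfold StartsAt
    rw [List.head?_eq_getElem?, hget 0 (by omega)]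
    rfl
  refine ⟨⟨⟨⟨hne, ?_⟩, src (f 0), hstart, ?_⟩, ?_⟩, hstart, hget⟩
  · rw [List.Chain', List.isChain_iff_getElem]
    intro i hi
    rw [List.getElem_ofFn, List.getElem_ofFn]
    exact hchain i (by simp [hlen] at hi ⊢; omega)
  · unfold EndsAt
    rw [List.getLast?_eq_getElem?, hlen, hget (d - 1) (by omega)]
    simp [hclosed]
  · rw [hCdef, List.map_ofFn, List.nodup_ofFn]
    intro a b hab
    simp only [Function.comp] at hab
    by_contra hne'
    rcases Nat.lt_or_ge (a : ℕ) (b : ℕ) with h | h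
    · exact hnodup a b h b.isLt hab
    · have h' : (b : ℕ) < (a : ℕ) := by
        rcases Nat.lt_or_ge (b : ℕ) (a : ℕ) with h2 | h2
        · exact h2
        · exact absurd (Fin.ext (le_antisymm h2 h)) hne'
      exact hnodup b a h' a.isLt hab.symm

private lemma keyLemma (hG : NoIntersectingCycles src tgt) (v : V) :
    ∀ n, 1 ≤ n → ∀ f : ℕ → E,
      (∀ k, k + 1 < n → tgt (f k) = src (f (k + 1))) →
      src (f 0) = v → tgt (f (n - 1)) = v →
      ∃ C : List E, IsSimpleCycle src tgt C ∧ StartsAt src C v ∧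
        C.length ∣ n ∧ ∀ k, k < n → C[k % C.length]? = some (f k) := by
  intro n
  induction n using Nat.strong_induction_on with
  | _ n IH =>
  intro hn f hchain h0 hlast
  classical
  set s : ℕ → V := fun k => if h : k < n then src (f k) else v with hsdef
  have hs0 : s 0 = v := by simp [hsdef, hn, h0]
  have hsn : s n = v := by simp [hsdef]
  have hsrc : ∀ k, k < n → src (f k) = s k := by
    intro k hk; simp [hsdef, hk]
  have hstep : ∀ k, k < n → tgt (f k) = s (k + 1) := by
    intro k hk
    by_cases h : k + 1 < n
    · have hs1 : s (k + 1) = src (f (k + 1)) := by simp [hsdef, h]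
      rw [hs1]
      exact hchain k h
    · have hk1 : k = n - 1 := by omega
      have hs1 : s (k + 1) = v := by simp [hsdef, h]
      rw [hs1, hk1]
      exact hlast
  have hPex : ∃ d, 0 < d ∧ ∃ i, i + d ≤ n ∧ s i = s (i + d) := by
    exact ⟨n, by omega, 0, by omega, by simp [hs0, hsn]⟩
  set d := Nat.find hPex with hddef
  obtain ⟨hd1, i, hidn, hsi⟩ := Nat.find_spec hPex
  have hmin : ∀ d', d' < d → ¬ (0 < d' ∧ ∃ i, i + d' ≤ n ∧ s i = s (i + d')) :=
    fun d' h => Nat.find_min hPex h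
  have hdn : d ≤ n := Nat.find_le ⟨by omega, 0, by omega, by simp [hs0, hsn]⟩
  have hnorep : ∀ a b, a < b → b - a < d → b ≤ n → s a ≠ s b := by
    intro a b hab hba hbn hse
    refine hmin (b - a) hba ⟨by omega, a, by omega, ?_⟩
    rw [show a + (b - a) = b from by omega]
    exact hse
  by_cases hdcase : d = n
  · -- the whole walk is a simple cycle
    have hnd : ∀ a b, a < b → b < n → src (f a) ≠ src (f b) := by
      intro a b hab hbn hse
      exact hnorep a b hab (by omega) (by omega)
        (by rw [← hsrc a (by omega), ← hsrc b hbn, hse])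
    obtain ⟨hC, hCs, hCget⟩ := mkCycle src tgt f n hn hchain (by rw [hlast, h0]) hnd
    refine ⟨_, hC, by rwa [h0] at hCs, ?_, ?_⟩
    · rw [List.length_ofFn]
    · intro k hk
      rw [List.length_ofFn, Nat.mod_eq_of_lt hk]
      exact hCget k hk
  · -- extract inner cycle of length d at position i, recurse on the rest
    have hdltn : d < n := lt_of_le_of_ne hdn hdcase
    have hin : i < n := by omega
    -- the inner simple cycle m
    have hmch : ∀ k, k + 1 < d → tgt (f (i + k)) = src (f (i + (k + 1))) := by
      intro k hk
      rw [show i + (k + 1) = (i + k) + 1 from by omega]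
      exact hchain (i + k) (by omega)
    have hmcl : tgt (f (i + (d - 1))) = src (f (i + 0)) := by
      rw [Nat.add_zero, show i + (d - 1) = (i + d) - 1 from by omega,
        hsrc i hin, hstep ((i + d) - 1) (by omega), show (i + d) - 1 + 1 = i + d from by omega]
      exact hsi.symm
    have hmnd : ∀ a b, a < b → b < d → src (f (i + a)) ≠ src (f (i + b)) := by
      intro a b hab hbd hse
      exact hnorep (i + a) (i + b) (by omega) (by omega) (by omega)
        (by rw [← hsrc (i + a) (by omega), ← hsrc (i + b) (by omega), hse])
    obtain ⟨hm, hms, hmget⟩ := mkCycle src tgt (fun k => f (i + k)) d hd1 hmch hmcl hmnd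
    set m : List E := List.ofFn fun k : Fin d => f (i + k) with hmdef
    have hmlen : m.length = d := List.length_ofFn
    -- the outer walk g
    set g : ℕ → E := fun k => if k < i then f k else f (k + d) with hgdef
    set n' := n - d with hn'def
    have hn'1 : 1 ≤ n' := by omega
    have hin' : i ≤ n' := by omega
    have hgchain : ∀ k, k + 1 < n' → tgt (g k) = src (g (k + 1)) := by
      intro k hk
      by_cases h1 : k + 1 < i
      · simp only [hgdef, if_pos h1, if_pos (show k < i by omega)]
        exact hchain k (by omega)
      · by_cases h2 : k + 1 = i
        · simp only [hgdef, if_pos (show k < i by omega), if_neg (show ¬ k + 1 < i by omega)]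
          rw [hstep k (by omega), hsrc (k + 1 + d) (by omega), h2]
          exact hsi
        · simp only [hgdef, if_neg (show ¬ k < i by omega), if_neg (show ¬ k + 1 < i by omega)]
          rw [show k + 1 + d = (k + d) + 1 from by omega]
          exact hchain (k + d) (by omega)
    have hg0 : src (g 0) = v := by
      by_cases h1 : 0 < i
      · simp only [hgdef, if_pos h1]; exact h0
      · have hi0 : i = 0 := by omega
        rw [hi0] at hsi
        rw [show (0 : ℕ) + d = d from by omega] at hsi
        simp only [hgdef, if_neg (show ¬ (0:ℕ) < i by omega)]
        rw [show (0 : ℕ) + d = d from by omega, hsrc d (by omega), ← hsi, hs0]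
    have hglast : tgt (g (n' - 1)) = v := by
      by_cases h1 : n' - 1 < i
      · have hieq : i = n' := by omega
        rw [hieq] at hsi
        rw [show n' + d = n from by omega] at hsi
        simp only [hgdef, if_pos h1]
        rw [hstep (n' - 1) (by omega), show n' - 1 + 1 = n' from by omega, hsi, hsn]
      · simp only [hgdef, if_neg h1]
        rw [show n' - 1 + d = n - 1 from by omega]
        exact hlast
    obtain ⟨C, hC, hCs, hCdvd, hCval⟩ := IH n' (by omega) hn'1 g hgchain hg0 hglast
    set c := C.length with hcdef
    have hCne : C ≠ [] := hC.1.1.1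
    have hc : 0 < c := List.length_pos_iff.mpr hCne
    -- alignment: the vertex w = s i sits at index i % c of C
    have halign : ∃ hh : i % c < c, src (C[i % c]'hh) = s i := by
      by_cases hii : i < n'
      · have hval := hCval i hii
        rw [List.getElem?_eq_some_iff] at hval
        obtain ⟨hh, heq⟩ := hval
        refine ⟨hh, ?_⟩
        rw [heq]
        simp only [hgdef, if_neg (show ¬ i < i by omega)]
        rw [hsrc (i + d) (by omega), hsi]
      · have hieq : i = n' := by omega
        have hmod : i % c = 0 := by rw [hieq]; exact Nat.mod_eq_zero_of_dvd hCdvd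
        have hval := hCval 0 (by omega)
        rw [Nat.zero_mod] at hval
        rw [List.getElem?_eq_some_iff] at hval
        obtain ⟨hh, heq⟩ := hval
        refine ⟨by omega, ?_⟩
        simp only [hmod]
        rw [heq, hg0, hsi, hieq, show n' + d = n from by omega, hsn]
    obtain ⟨hic, hwc⟩ := halign
    have honC : OnCycle src C (s i) := by
      rw [OnCycle, List.mem_map]
      exact ⟨C[i % c]'hic, List.getElem_mem hic, hwc⟩
    have h0m : m[0]? = some (f (i + 0)) := hmget 0 (by omega)
    have honm : OnCycle src m (s i) := by
      rw [OnCycle, List.mem_map]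
      rw [List.getElem?_eq_some_iff] at h0m
      obtain ⟨hh, heq⟩ := h0m
      refine ⟨m[0]'hh, List.getElem_mem hh, ?_⟩
      rw [heq, Nat.add_zero]
      exact hsrc i hin
    have hrot : C.IsRotated m := by
      by_contra hnot
      exact hG C m hC hm hnot (s i) ⟨honC, honm⟩
    obtain ⟨t, ht⟩ := hrot
    have hrot' : C.rotate (t % c) = m := by rw [List.rotate_mod]; exact ht
    have hdc : d = c := by
      rw [← hmlen, ← hrot', List.length_rotate]
    set r := t % c with hrdef
    have hr : r < c := Nat.mod_lt _ hc
    have hnodupC : (C.map src).Nodup := hC.2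
    have hreq : r = i % c := by
      have h0m' : (C.rotate r)[0]? = some (f (i + 0)) := by rw [hrot']; exact h0m
      rw [List.getElem?_eq_some_iff] at h0m'
      obtain ⟨hh, heq⟩ := h0m'
      rw [List.getElem_rotate] at heq
      have hsrceq : src (C[(0 + r) % c]'(Nat.mod_lt _ hc)) = src (C[i % c]'hic) := by
        rw [heq, Nat.add_zero, hsrc i hin, hwc]
      have hinj := hnodupC.getElem_inj_iff (i := (0 + r) % c)
        (hi := by rw [List.length_map]; exact Nat.mod_lt _ hc)
        (j := i % c) (hj := by rw [List.length_map]; exact hic)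
      rw [List.getElem_map, List.getElem_map] at hinj
      have := hinj.mp hsrceq
      rwa [Nat.zero_add, Nat.mod_eq_of_lt hr] at this
    refine ⟨C, hC, hCs, ?_, ?_⟩
    · rw [show n = n' + c from by omega]
      exact Nat.dvd_add hCdvd dvd_rfl
    · intro k hk
      rcases Nat.lt_or_ge k i with hki | hki
      · have hval := hCval k (by omega)
        simp only [hgdef, if_pos hki] at hval
        exact hval
      · rcases Nat.lt_or_ge k (i + d) with hkid | hkid
        · -- inside the inner cycle
          have h1 : m[k - i]? = some (f (i + (k - i))) := hmget (k - i) (by omega)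
          rw [show i + (k - i) = k from by omega, ← hrot'] at h1
          rw [List.getElem?_eq_some_iff] at h1
          obtain ⟨hh, heq⟩ := h1
          rw [List.getElem_rotate] at heq
          have hmodeq : (k - i + r) % c = k % c := by
            rw [hreq, Nat.add_mod (k - i) (i % c), Nat.mod_mod,
              ← Nat.add_mod (k - i) i, show k - i + i = k from by omega]
          rw [List.getElem?_eq_some_iff]
          refine ⟨Nat.mod_lt _ hc, ?_⟩
          rw [← heq]
          congr 1
          rw [hmodeq]
        · -- after the inner cycle
          have h1 := hCval (k - d) (by omega)
          simp only [hgdef, if_neg (show ¬ k - d < i by omega)] at h1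
          rw [show k - d + d = k from by omega] at h1
          have hmodeq : (k - d) % c = k % c := by
            conv_rhs => rw [show k = (k - c) + c from by omega]
            rw [Nat.add_mod_right, ← hdc]
          rw [← hmodeq]
          exact h1

private lemma cycleUnique (hG : NoIntersectingCycles src tgt) {v : V}
    {C C' : List E} (hC : IsSimpleCycle src tgt C) (hC' : IsSimpleCycle src tgt C')
    (hs : StartsAt src C v) (hs' : StartsAt src C' v) : C = C' := by
  have hCne : C ≠ [] := hC.1.1.1
  have hc : 0 < C.length := List.length_pos_iff.mpr hCne
  have hC'ne : C' ≠ [] := hC'.1.1.1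
  have hc' : 0 < C'.length := List.length_pos_iff.mpr hC'ne
  rw [StartsAt, List.head?_eq_getElem?, Option.map_eq_some_iff] at hs hs'
  obtain ⟨e0, he0, hse0⟩ := hs
  obtain ⟨e0', he0', hse0'⟩ := hs'
  rw [List.getElem?_eq_some_iff] at he0 he0'
  obtain ⟨h0, he0⟩ := he0
  obtain ⟨h0', he0'⟩ := he0'
  have honC : OnCycle src C v := by
    rw [OnCycle, List.mem_map]
    exact ⟨e0, he0 ▸ List.getElem_mem h0, hse0⟩
  have honC' : OnCycle src C' v := by
    rw [OnCycle, List.mem_map]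
    exact ⟨e0', he0' ▸ List.getElem_mem h0', hse0'⟩
  have hrot : C.IsRotated C' := by
    by_contra hnot
    exact hG C C' hC hC' hnot v ⟨honC, honC'⟩
  obtain ⟨t, ht⟩ := hrot
  have hrot' : C.rotate (t % C.length) = C' := by rw [List.rotate_mod]; exact ht
  set r := t % C.length with hrdef
  have hr : r < C.length := Nat.mod_lt _ hc
  have h0r : (C.rotate r)[0]? = some e0' := by
    rw [hrot', ← he0', List.getElem?_eq_some_iff]
    exact ⟨h0', rfl⟩
  rw [List.getElem?_eq_some_iff] at h0r
  obtain ⟨hh, heq⟩ := h0r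
  rw [List.getElem_rotate] at heq
  have hsrceq : src (C[(0 + r) % C.length]'(Nat.mod_lt _ hc)) = src (C[0]'h0) := by
    rw [heq, hse0', he0, hse0]
  have hnodupC : (C.map src).Nodup := hC.2
  have hinj := hnodupC.getElem_inj_iff (i := (0 + r) % C.length)
    (hi := by rw [List.length_map]; exact Nat.mod_lt _ hc)
    (j := 0) (hj := by rw [List.length_map]; omega)
  rw [List.getElem_map, List.getElem_map] at hinj
  have hr0 := hinj.mp hsrceq
  rw [Nat.zero_add, Nat.mod_eq_of_lt hr] at hr0
  rw [← hrot', hr0, List.rotate_zero]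

end Aux

/-- If a finite directed multigraph has no intersecting cycles, then
every infinite path is eventually periodic. -/
theorem infPath_eventually_periodic [Fintype V] [Fintype E] (src tgt : E → V)
    (hG : NoIntersectingCycles src tgt) (p : ℕ → E) (hp : IsInfPath src tgt p) :
    ∃ (N q : ℕ), 1 ≤ q ∧ ∀ n ≥ N, p (n + q) = p n := by
  obtain ⟨e, he⟩ := Finite.exists_infinite_fiber p
  have hS : (p ⁻¹' {e} : Set ℕ).Infinite := Set.infinite_coe_iff.mp he
  set v := src e with hvdef
  obtain ⟨n₁, hn₁, -⟩ := hS.exists_gt 0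
  have hpn₁ : p n₁ = e := hn₁
  have hseg : ∀ n₂, p n₂ = e → n₁ < n₂ →
      ∃ C, IsSimpleCycle src tgt C ∧ StartsAt src C v ∧
        ∀ k, k < n₂ - n₁ → C[k % C.length]? = some (p (n₁ + k)) := by
    intro n₂ h2 hlt
    obtain ⟨C, hC, hCs, -, hval⟩ := keyLemma hG v (n₂ - n₁) (by omega) (fun k => p (n₁ + k))
      (fun k hk => by
        show tgt (p (n₁ + k)) = src (p (n₁ + (k + 1)))
        rw [show n₁ + (k + 1) = (n₁ + k) + 1 from by omega]
        exact hp (n₁ + k))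
      (by
        show src (p (n₁ + 0)) = v
        rw [Nat.add_zero, hpn₁])
      (by
        show tgt (p (n₁ + (n₂ - n₁ - 1))) = v
        rw [show n₁ + (n₂ - n₁ - 1) = n₂ - 1 from by omega, hp (n₂ - 1),
          show n₂ - 1 + 1 = n₂ from by omega, h2])
    exact ⟨C, hC, hCs, hval⟩
  obtain ⟨n₂, hn₂, hlt₂⟩ := hS.exists_gt n₁
  obtain ⟨C, hC, hCs, -⟩ := hseg n₂ hn₂ hlt₂
  have hCne : C ≠ [] := hC.1.1.1
  have hc : 0 < C.length := List.length_pos_iff.mpr hCne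
  have hall : ∀ k, C[k % C.length]? = some (p (n₁ + k)) := by
    intro k
    obtain ⟨n₃, hn₃, hlt₃⟩ := hS.exists_gt (n₁ + k)
    obtain ⟨C', hC', hCs', hval'⟩ := hseg n₃ hn₃ (by omega)
    have hCC : C = C' := cycleUnique hG hC hC' hCs hCs'
    rw [hCC]
    exact hval' k (by omega)
  refine ⟨n₁, C.length, hc, ?_⟩
  intro n hn
  have h1 := hall (n - n₁)
  have h2 := hall (n - n₁ + C.length)
  rw [Nat.add_mod_right, h1] at h2
  rw [show n₁ + (n - n₁ + C.length) = n + C.length from by omega,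
    show n₁ + (n - n₁) = n from by omega] at h2
  exact (Option.some_injective _ h2).symm
end
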